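/- arXiv:1502.00782 — 5 statements merged into one kernel-verified Lean document; each statement's English description precedes it below -/
import Mathlib

section
/- Let s ∈ (0,1) and α ∈ [s, 1+s). Let Ω ⊂ ℝⁿ be a convex open set, p, q ∈ ℝⁿ, R > 0 with B_R(p) ∪ B_R(q) ⊆ Ω, and ω ∈ S^{n−1}. Then ∫_R^∞ χ_Ω(p+ρω) χ_Ω(q+ρω) / (d(p+ρω, q+ρω)^{α−s} ρ^{1+2s}) dρ ≤ C R^{−s−α}, with C depending only on α, n, s (and bounded by C'/s with C' independent of s). -/
open Metric MeasureTheory Set Filter Topology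

variable {E : Type*} [NormedAddCommGroup E] [NormedSpace ℝ E]

/-- Cone estimate: ball around intermediate point on a segment from a ball. -/
lemma cone_ball_subset {Ω : Set E} (hconv : Convex ℝ Ω) {p ω : E} {R ρ t : ℝ}
    (hball : ball p R ⊆ Ω) (h0ρ : 0 < ρ) (hρt : ρ < t) (ht : p + t • ω ∈ Ω) :
    ball (p + ρ • ω) (R * (t - ρ) / t) ⊆ Ω := by
  have ht0 : 0 < t := h0ρ.trans hρt
  intro z hz
  rw [mem_ball, dist_eq_norm] at hz
  set a : ℝ := ρ / t with ha
  have hat : a * t = ρ := div_mul_cancel₀ _ ht0.ne'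
  have ha0 : 0 < a := div_pos h0ρ ht0
  have ha1 : a < 1 := (div_lt_one ht0).mpr hρt
  have h1a : (0:ℝ) < 1 - a := by linarith
  have hreq : R * (t - ρ) / t = (1 - a) * R := by rw [ha]; field_simp
  rw [hreq] at hz
  set w : E := p + (1 - a)⁻¹ • (z - (p + ρ • ω)) with hw
  have hwball : w ∈ ball p R := by
    rw [mem_ball, dist_eq_norm]
    have hwp : w - p = (1 - a)⁻¹ • (z - (p + ρ • ω)) := by rw [hw]; abel
    rw [hwp, norm_smul, Real.norm_eq_abs, abs_of_pos (inv_pos.mpr h1a)]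
    calc (1 - a)⁻¹ * ‖z - (p + ρ • ω)‖ < (1 - a)⁻¹ * ((1 - a) * R) :=
          mul_lt_mul_of_pos_left hz (inv_pos.mpr h1a)
      _ = R := inv_mul_cancel_left₀ h1a.ne' R
  have key : a • (p + t • ω) + (1 - a) • w = z := by
    rw [hw]
    match_scalars <;>
      · field_simp [ha, ht0.ne', sub_ne_zero.mpr hρt.ne']
        try ring
        try linarith [hat]
  have := hconv ht (hball hwball) ha0.le h1a.le (by ring)
  rwa [key] at this

omit [NormedSpace ℝ E] in
lemma le_infDist_frontier {Ω : Set E} (hΩ : IsOpen Ω) {x : E} {r : ℝ}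
    (hne : (frontier Ω).Nonempty) (hr : ball x r ⊆ Ω) :
    r ≤ infDist x (frontier Ω) := by
  by_contra h
  push_neg at h
  obtain ⟨y, hy, hxy⟩ := (Metric.infDist_lt_iff hne).mp h
  have hyΩ : y ∉ Ω := by
    have := hΩ.frontier_eq ▸ hy
    exact fun hc => this.2 hc
  exact hyΩ (hr (by rwa [mem_ball, dist_comm]))

omit [NormedSpace ℝ E] in
/-- Pointwise bound for the integrand when both points have a common interior ball. -/
lemma pointwise_bound {Ω : Set E} (hΩ : IsOpen Ω) {x y : E} {r ρ β e : ℝ}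
    (hβ : 0 ≤ β) (hr : 0 < r) (hρ : 0 < ρ)
    (hx : ball x r ⊆ Ω) (hy : ball y r ⊆ Ω) :
    (Set.indicator Ω (fun _ => (1:ℝ)) x * Set.indicator Ω (fun _ => (1:ℝ)) y) /
      ((min (infDist x (frontier Ω)) (infDist y (frontier Ω))) ^ β * ρ ^ e)
      ≤ r ^ (-β) * ρ ^ (-e) := by
  have hxΩ : x ∈ Ω := hx (mem_ball_self hr)
  have hyΩ : y ∈ Ω := hy (mem_ball_self hr)
  rw [Set.indicator_of_mem hxΩ, Set.indicator_of_mem hyΩ, one_mul]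
  rcases (frontier Ω).eq_empty_or_nonempty with hF | hF
  · rw [hF]
    simp only [Metric.infDist_empty, min_self]
    rcases eq_or_lt_of_le hβ with hβ0 | hβ0
    · rw [← hβ0, neg_zero, Real.rpow_zero, Real.rpow_zero, one_mul, one_mul, one_div,
        Real.rpow_neg hρ.le]
    · rw [Real.zero_rpow hβ0.ne', zero_mul, div_zero]
      positivity
  · have hdx := le_infDist_frontier hΩ hF hx
    have hdy := le_infDist_frontier hΩ hF hy
    have hm : r ≤ min (infDist x (frontier Ω)) (infDist y (frontier Ω)) := le_min hdx hdy
    have hm0 : 0 < min (infDist x (frontier Ω)) (infDist y (frontier Ω)) := hr.trans_le hm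
    rw [Real.rpow_neg hr.le, Real.rpow_neg hρ.le, ← mul_inv, one_div]
    rw [inv_le_inv₀ (by positivity) (by positivity)]
    exact mul_le_mul_of_nonneg_right (Real.rpow_le_rpow hr.le hm hβ) (by positivity)

open intervalIntegral in
private lemma aux_integral_rpow {a b r : ℝ} (h : -1 < r) :
    ∫ x in a..b, x ^ r = (b^(r+1) - a^(r+1))/(r+1) :=
  integral_rpow (Or.inl h)

set_option maxHeartbeats 1000000 in
/-- Lemma (convex domains, two base points): for `s ∈ (0,1)`, `α ∈ [s, 1+s)`,
`Ω` convex open with `B_R(p) ∪ B_R(q) ⊆ Ω`, and `ω ∈ S^{n-1}`,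
`∫_R^∞ χ_Ω(p+ρω) χ_Ω(q+ρω) d(p+ρω,q+ρω)^{s-α} ρ^{-1-2s} dρ ≤ C R^{-s-α}`,
with `C` depending only on `α, n, s`. -/
theorem convex_weighted_line_integral_two_points
    (n : ℕ) (s α : ℝ) (hs : s ∈ Set.Ioo (0 : ℝ) 1)
    (hα : α ∈ Set.Ico s (1 + s)) :
    ∃ C > 0, ∀ (Ω : Set (EuclideanSpace ℝ (Fin n)))
      (p q ω : EuclideanSpace ℝ (Fin n)) (R : ℝ),
      Convex ℝ Ω → IsOpen Ω → 0 < R → ‖ω‖ = 1 →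
      Metric.ball p R ∪ Metric.ball q R ⊆ Ω →
      (∫ ρ in Set.Ioi R,
          (Set.indicator Ω (fun _ => (1 : ℝ)) (p + ρ • ω) *
            Set.indicator Ω (fun _ => (1 : ℝ)) (q + ρ • ω)) /
            ((min (Metric.infDist (p + ρ • ω) (frontier Ω))
                  (Metric.infDist (q + ρ • ω) (frontier Ω))) ^ (α - s) *
              ρ ^ (1 + 2 * s)))
        ≤ C * R ^ (-s - α) := by
  obtain ⟨hs0, hs1⟩ := hs
  obtain ⟨hαs, hα1⟩ := hα
  have hβ0 : (0:ℝ) ≤ α - s := by linarith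
  have hβ1 : α - s < 1 := by linarith
  have h1β : (0:ℝ) < 1 - (α - s) := by linarith
  refine ⟨1/s + 2/(1 - (α - s)) + 1, by positivity, ?_⟩
  intro Ω p q ω R hconv hopen hR hω hballs
  have hbp : ball p R ⊆ Ω := fun z hz => hballs (Or.inl hz)
  have hbq : ball q R ⊆ Ω := fun z hz => hballs (Or.inr hz)
  set β : ℝ := α - s with hβdef
  set e : ℝ := 1 + 2*s with hedef
  have he1 : (-e:ℝ) < -1 := by rw [hedef]; linarith
  have hRpow : (0:ℝ) < R ^ (-s-α) := Real.rpow_pos_of_pos hR _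
  set F : ℝ → ℝ := fun ρ =>
    (Set.indicator Ω (fun _ => (1 : ℝ)) (p + ρ • ω) *
      Set.indicator Ω (fun _ => (1 : ℝ)) (q + ρ • ω)) /
      ((min (Metric.infDist (p + ρ • ω) (frontier Ω))
            (Metric.infDist (q + ρ • ω) (frontier Ω))) ^ β * ρ ^ e) with hFdef
  show ∫ ρ in Set.Ioi R, F ρ ≤ _
  set S : Set ℝ := {t : ℝ | p + t • ω ∈ Ω ∧ q + t • ω ∈ Ω} with hSdef
  have hSconv : Convex ℝ S := by
    intro t1 ht1 t2 ht2 a b ha hb hab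
    have key : ∀ v : EuclideanSpace ℝ (Fin n), v + (a • t1 + b • t2) • ω = a • (v + t1 • ω) + b • (v + t2 • ω) := by
      intro v
      have : a • (v + t1 • ω) + b • (v + t2 • ω) = (a + b) • v + (a*t1 + b*t2) • ω := by
        module
      rw [this, hab, one_smul, smul_eq_mul, smul_eq_mul]
    exact ⟨by rw [key p]; exact hconv ht1.1 ht2.1 ha hb hab,
           by rw [key q]; exact hconv ht1.2 ht2.2 ha hb hab⟩
  have hcont1 : Continuous fun t : ℝ => p + t • ω :=
    continuous_const.add (continuous_id.smul continuous_const)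
  have hcont2 : Continuous fun t : ℝ => q + t • ω :=
    continuous_const.add (continuous_id.smul continuous_const)
  have hSopen : IsOpen S := by
    have : S = (fun t : ℝ => p + t • ω) ⁻¹' Ω ∩ (fun t : ℝ => q + t • ω) ⁻¹' Ω := rfl
    rw [this]
    exact (hopen.preimage hcont1).inter (hopen.preimage hcont2)
  have hIS : ∀ t : ℝ, |t| < R → t ∈ S := by
    intro t ht
    have hd : ∀ v : EuclideanSpace ℝ (Fin n), dist (v + t • ω) v < R := by
      intro v
      rw [dist_eq_norm, add_sub_cancel_left, norm_smul, hω, mul_one, Real.norm_eq_abs]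
      exact ht
    exact ⟨hbp (mem_ball.mpr (hd p)), hbq (mem_ball.mpr (hd q))⟩
  have h0S : (0:ℝ) ∈ S := hIS 0 (by rwa [abs_zero])
  have hf0 : ∀ ρ : ℝ, ρ ∉ S → F ρ = 0 := by
    intro ρ hρ
    rw [hFdef]
    simp only []
    rcases not_and_or.mp hρ with h | h
    · rw [Set.indicator_of_notMem h, zero_mul, zero_div]
    · rw [Set.indicator_of_notMem h, mul_zero, zero_div]
  have hfnn : ∀ ρ : ℝ, R < ρ → 0 ≤ F ρ := by
    intro ρ hρ
    apply div_nonneg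
    · exact mul_nonneg (Set.indicator_nonneg (fun _ _ => zero_le_one) _)
        (Set.indicator_nonneg (fun _ _ => zero_le_one) _)
    · exact mul_nonneg (Real.rpow_nonneg (le_min infDist_nonneg infDist_nonneg) _)
        (Real.rpow_nonneg (by linarith) _)
  by_cases hbdd : BddAbove S
  case neg =>
    -- the ray case: distance to the boundary is at least R
    have key : ∀ v : EuclideanSpace ℝ (Fin n), ball v R ⊆ Ω →
        (∀ t ∈ S, v + t • ω ∈ Ω) →
        ∀ ρ : ℝ, ρ ∈ S → R < ρ → ball (v + ρ • ω) R ⊆ Ω := by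
      intro v hb hvmem ρ hρS hρR z hz
      rw [mem_ball, dist_eq_norm] at hz
      have hzR : ‖z - (v + ρ • ω)‖ < R := hz
      have hRc : 0 < R - ‖z - (v + ρ • ω)‖ := by linarith
      obtain ⟨t, htS, htlt⟩ := not_bddAbove_iff.mp hbdd (max ρ (R*ρ/(R - ‖z - (v + ρ • ω)‖)))
      have htρ : ρ < t := lt_of_le_of_lt (le_max_left _ _) htlt
      have ht0 : 0 < t := lt_trans (lt_trans hR hρR) htρ
      have h1 : R*ρ/(R - ‖z - (v + ρ • ω)‖) < t := lt_of_le_of_lt (le_max_right _ _) htlt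
      rw [div_lt_iff₀ hRc] at h1
      have hct : ‖z - (v + ρ • ω)‖ < R * (t - ρ) / t := by
        rw [lt_div_iff₀ ht0]; nlinarith
      exact cone_ball_subset hconv hb (lt_trans hR hρR) htρ (hvmem t htS)
        (mem_ball.mpr (by rw [dist_eq_norm]; exact hct))
    have hpt : ∀ ρ ∈ Ioi R, F ρ ≤ R ^ (-β) * ρ ^ (-e) := by
      intro ρ hρ
      rw [mem_Ioi] at hρ
      by_cases hρS : ρ ∈ S
      · exact pointwise_bound hopen hβ0 hR (lt_trans hR hρ)
          (key p hbp (fun t ht => ht.1) ρ hρS hρ)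
          (key q hbq (fun t ht => ht.2) ρ hρS hρ)
      · rw [hf0 ρ hρS]
        have : (0:ℝ) < ρ := lt_trans hR hρ
        positivity
    have hInt : IntegrableOn (fun ρ : ℝ => R ^ (-β) * ρ ^ (-e)) (Ioi R) :=
      (integrableOn_Ioi_rpow_of_lt he1 hR).const_mul _
    calc ∫ ρ in Set.Ioi R, F ρ ≤ ∫ ρ in Set.Ioi R, R ^ (-β) * ρ ^ (-e) := by
          apply integral_mono_of_nonneg
          · exact (ae_restrict_iff' measurableSet_Ioi).mpr
              (ae_of_all _ (fun ρ hρ => hfnn ρ hρ))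
          · exact hInt
          · exact (ae_restrict_iff' measurableSet_Ioi).mpr
              (ae_of_all _ (fun ρ hρ => hpt ρ hρ))
      _ = R ^ (-β) * (-R ^ (-e + 1) / (-e + 1)) := by
          rw [MeasureTheory.integral_const_mul, integral_Ioi_rpow_of_lt he1 hR]
      _ = R ^ (-β) * R ^ (-(2*s)) / (2*s) := by
          rw [hedef]
          rw [show -(1+2*s) + 1 = -(2*s) by ring]
          field_simp
      _ = R ^ (-s - α) / (2*s) := by
          rw [← Real.rpow_add hR, hβdef]
          ring_nf
      _ ≤ (1/s + 2/(1 - (α - s)) + 1) * R ^ (-s - α) := by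
          rw [div_eq_mul_one_div, mul_comm]
          apply mul_le_mul_of_nonneg_right _ hRpow.le
          rw [← hβdef]
          have : 1/(2*s) ≤ 1/s := by
            apply one_div_le_one_div_of_le hs0; linarith
          have h2 : 0 < 2/(1-β) := by positivity
          linarith
  case pos =>
    set T : ℝ := sSup S with hTdef
    have hTR : R ≤ T := by
      refine le_of_forall_lt fun c hc => ?_
      have hmc : max c 0 < R := max_lt hc hR
      have hcmax : c ≤ max c 0 := le_max_left c 0
      have h0max : 0 ≤ max c 0 := le_max_right c 0
      have h0t : 0 ≤ (max c 0 + R)/2 := by linarith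
      have htR : (max c 0 + R)/2 < R := by linarith
      have hct : c < (max c 0 + R)/2 := by linarith
      exact lt_of_lt_of_le hct (le_csSup hbdd (hIS _ (by rwa [abs_of_nonneg h0t])))
    have hT0 : 0 < T := lt_of_lt_of_le hR hTR
    have hρT : ∀ ρ ∈ S, ρ < T := by
      intro ρ hρS
      obtain ⟨ε, hε, hball⟩ := Metric.isOpen_iff.mp hSopen ρ hρS
      have hmem : ρ + ε/2 ∈ S := by
        apply hball
        rw [mem_ball, Real.dist_eq, add_sub_cancel_left, abs_of_pos (by linarith)]
        linarith
      calc ρ < ρ + ε/2 := by linarith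
        _ ≤ T := le_csSup hbdd hmem
    set G : ℝ → ℝ := fun ρ => (R*(T-ρ)/T)^(-β) * ρ^(-e) with hGdef
    have hpt : ∀ ρ ∈ Ioi R, F ρ ≤ Set.indicator (Ioo R T) G ρ := by
      intro ρ hρ
      rw [mem_Ioi] at hρ
      have hρ0 : 0 < ρ := lt_trans hR hρ
      by_cases hρS : ρ ∈ S
      · have hρT' : ρ < T := hρT ρ hρS
        rw [Set.indicator_of_mem (Set.mem_Ioo.mpr ⟨hρ, hρT'⟩)]
        have hball : ∀ t ∈ Ioo ρ T, F ρ ≤ (R*(t-ρ)/t)^(-β) * ρ^(-e) := by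
          intro t ht
          obtain ⟨u, huS, htu⟩ := exists_lt_of_lt_csSup ⟨0, h0S⟩ ht.2
          have htS : t ∈ S := hSconv.ordConnected.out hρS huS ⟨ht.1.le, htu.le⟩
          have h1 : 0 < t - ρ := sub_pos.mpr ht.1
          have h2 : 0 < t := lt_trans hρ0 ht.1
          exact pointwise_bound hopen hβ0 (by positivity) hρ0
            (cone_ball_subset hconv hbp hρ0 ht.1 htS.1)
            (cone_ball_subset hconv hbq hρ0 ht.1 htS.2)
        have hTρ : 0 < T - ρ := sub_pos.mpr hρT'
        have hcont : Tendsto (fun t => (R*(t-ρ)/t)^(-β) * ρ^(-e)) (𝓝[<] T)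
            (𝓝 ((R*(T-ρ)/T)^(-β) * ρ^(-e))) := by
          apply Tendsto.mul_const
          have hbase : ContinuousAt (fun t : ℝ => R*(t-ρ)/t) T :=
            (continuousAt_const.mul (continuousAt_id.sub continuousAt_const)).div
              continuousAt_id hT0.ne'
          have hb0 : R*(T-ρ)/T ≠ 0 := by positivity
          exact (hbase.rpow_const (Or.inl hb0)).continuousWithinAt
        exact ge_of_tendsto hcont (Filter.eventually_of_mem
          (Ioo_mem_nhdsLT hρT') (fun t ht => hball t ht))
      · rw [hf0 ρ hρS]
        apply Set.indicator_nonneg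
        intro t ht
        have h1 : 0 < t := lt_trans hR ht.1
        have h2 : 0 < T - t := sub_pos.mpr ht.2
        positivity
    rcases eq_or_lt_of_le hTR with hRT | hRT
    · have hzero : ∀ ρ ∈ Ioi R, F ρ ≤ 0 := by
        intro ρ hρ
        have h := hpt ρ hρ
        rw [← hRT, Set.Ioo_self, Set.indicator_empty] at h
        exact h
      calc ∫ ρ in Set.Ioi R, F ρ ≤ ∫ _ρ in Set.Ioi R, (0:ℝ) := by
            apply integral_mono_of_nonneg
            · exact (ae_restrict_iff' measurableSet_Ioi).mpr
                (ae_of_all _ (fun ρ hρ => hfnn ρ hρ))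
            · exact integrable_zero _ _ _
            · exact (ae_restrict_iff' measurableSet_Ioi).mpr
                (ae_of_all _ (fun ρ hρ => hzero ρ hρ))
        _ = 0 := integral_zero _ _
        _ ≤ _ := by positivity
    · set M : ℝ := max R (T/2) with hMdef
      have hRM : R ≤ M := le_max_left _ _
      have hM0 : 0 < M := lt_of_lt_of_le hR hRM
      have hMT : M < T := max_lt hRT (by linarith)
      have hT2M : T ≤ 2*M := by
        have := le_max_right R (T/2); rw [← hMdef] at this; linarith
      have hTM0 : 0 < T - M := sub_pos.mpr hMT
      have hTMM : T - M ≤ M := by linarith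
      set c1 : ℝ := 2^β * R^(-β) with hc1
      set c2 : ℝ := (2*M/R)^β * M^(-e) with hc2
      set H1 : ℝ → ℝ := fun ρ => c1 * ρ^(-e) with hH1
      set H2 : ℝ → ℝ := fun ρ => c2 * (T-ρ)^(-β) with hH2
      have hc1pos : 0 < c1 := by positivity
      have hc2pos : 0 < c2 := by positivity
      have hβneg : -β ≤ 0 := neg_nonpos.mpr hβ0
      have hbd : ∀ ρ ∈ Ioo R T, G ρ ≤ H1 ρ + Set.indicator (Ioo M T) H2 ρ := by
        intro ρ hρ
        have hρ0 : 0 < ρ := lt_trans hR hρ.1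
        have hTρ : 0 < T - ρ := sub_pos.mpr hρ.2
        by_cases hρM : ρ ≤ M
        · have hρT2 : ρ ≤ T/2 := by
            rcases le_total (T/2) R with h | h
            · exfalso
              rw [hMdef, max_eq_left h] at hρM
              exact absurd hρM (not_le.mpr hρ.1)
            · rwa [hMdef, max_eq_right h] at hρM
          have hG1 : G ρ ≤ H1 ρ := by
            rw [hGdef, hH1, hc1]
            apply mul_le_mul_of_nonneg_right _ (Real.rpow_nonneg hρ0.le _)
            calc (R*(T-ρ)/T)^(-β) ≤ (R/2)^(-β) := by
                  apply Real.rpow_le_rpow_of_nonpos (by positivity) _ hβneg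
                  rw [div_le_div_iff₀ two_pos hT0]
                  nlinarith
              _ = 2^β * R^(-β) := by
                  rw [Real.div_rpow hR.le (by norm_num : (0:ℝ) ≤ 2),
                    show ((2:ℝ))^(-β) = ((2:ℝ)^β)⁻¹ from Real.rpow_neg (by norm_num) β,
                    div_eq_mul_inv, inv_inv]
                  ring
          have hge0 : 0 ≤ Set.indicator (Ioo M T) H2 ρ := by
            apply Set.indicator_nonneg
            intro t ht
            have h1 : 0 < T - t := sub_pos.mpr ht.2
            rw [hH2]
            positivity
          linarith [hG1]
        · push_neg at hρM
          rw [Set.indicator_of_mem (Set.mem_Ioo.mpr ⟨hρM, hρ.2⟩)]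
          have step : G ρ ≤ (R*(T-ρ)/(2*M))^(-β) * M^(-e) := by
            rw [hGdef]
            apply mul_le_mul
            · apply Real.rpow_le_rpow_of_nonpos (by positivity) _ hβneg
              exact div_le_div_of_nonneg_left (by positivity) hT0 hT2M
            · exact Real.rpow_le_rpow_of_nonpos hM0 hρM.le (by rw [hedef]; linarith)
            · exact Real.rpow_nonneg hρ0.le _
            · exact Real.rpow_nonneg (by positivity) _
          have eqq : (R*(T-ρ)/(2*M))^(-β) * M^(-e) = H2 ρ := by
            rw [hH2, hc2]
            rw [show R*(T-ρ)/(2*M) = (R/(2*M)) * (T-ρ) by ring]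
            rw [Real.mul_rpow (by positivity) hTρ.le,
              Real.rpow_neg (by positivity : (0:ℝ) ≤ R/(2*M)),
              ← Real.inv_rpow (by positivity : (0:ℝ) ≤ R/(2*M)), inv_div]
            ring
          have hH1nn : 0 ≤ H1 ρ := by rw [hH1]; positivity
          linarith [step, eqq.le, eqq.ge]
      -- integrability facts
      have hGmeas : Measurable G := by rw [hGdef]; fun_prop
      have hIH1 : IntegrableOn H1 (Ioi R) := by
        rw [hH1]
        exact (integrableOn_Ioi_rpow_of_lt he1 hR).const_mul _
      have hIH1' : IntegrableOn H1 (Ioo R T) := hIH1.mono_set Ioo_subset_Ioi_self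
      have hII : IntervalIntegrable (fun ρ : ℝ => (T-ρ)^(-β)) volume M T := by
        have h1 : IntervalIntegrable (fun x : ℝ => x^(-β)) volume (T - M) (T - T) :=
          intervalIntegral.intervalIntegrable_rpow' (by linarith : (-1:ℝ) < -β)
        have h2 := h1.comp_sub_left T
        simpa using h2
      have hIH2 : IntegrableOn H2 (Ioo M T) := by
        rw [hH2]
        exact (((intervalIntegrable_iff_integrableOn_Ioc_of_le hMT.le).mp
          hII).mono_set Ioo_subset_Ioc_self).const_mul _
      have hIndH2 : Integrable (Set.indicator (Ioo M T) H2) :=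
        hIH2.integrable_indicator measurableSet_Ioo
      have hsum : IntegrableOn
          (fun ρ => H1 ρ + Set.indicator (Ioo M T) H2 ρ) (Ioo R T) :=
        hIH1'.add hIndH2.integrableOn
      have hIG : IntegrableOn G (Ioo R T) := by
        apply Integrable.mono' hsum hGmeas.aestronglyMeasurable
        refine (ae_restrict_iff' measurableSet_Ioo).mpr (ae_of_all _ (fun ρ hρ => ?_))
        have hρ0 : 0 < ρ := lt_trans hR hρ.1
        have hTρ : 0 < T - ρ := sub_pos.mpr hρ.2
        rw [Real.norm_eq_abs, abs_of_nonneg (by rw [hGdef]; positivity)]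
        exact hbd ρ hρ
      have hIndG : IntegrableOn (Set.indicator (Ioo R T) G) (Ioi R) :=
        (hIG.integrable_indicator measurableSet_Ioo).integrableOn
      -- value of the two model integrals
      have h2le : (2:ℝ)^β ≤ 2 := by
        calc (2:ℝ)^β ≤ 2^(1:ℝ) :=
              Real.rpow_le_rpow_of_exponent_le one_le_two hβ1.le
          _ = 2 := Real.rpow_one 2
      have val1 : ∫ ρ in Set.Ioi R, H1 ρ ≤ (1/s) * R^(-s-α) := by
        rw [hH1]
        calc ∫ ρ in Set.Ioi R, c1 * ρ^(-e)
            = c1 * (-R ^ (-e + 1) / (-e + 1)) := by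
              rw [MeasureTheory.integral_const_mul, integral_Ioi_rpow_of_lt he1 hR]
          _ = 2^β * (R^(-β) * R^(-(2*s))) / (2*s) := by
              rw [hc1, hedef, show -(1+2*s)+1 = -(2*s) by ring]
              field_simp
          _ = 2^β * R^(-s-α) / (2*s) := by
              rw [← Real.rpow_add hR, show -β + -(2*s) = -s-α by rw [hβdef]; ring]
          _ ≤ 2 * R^(-s-α) / (2*s) := by
              gcongr
          _ = (1/s) * R^(-s-α) := by
              field_simp
      have ival : ∫ ρ in Set.Ioo M T, (T-ρ)^(-β) = (T-M)^(1-β)/(1-β) := by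
        rw [← integral_Ioc_eq_integral_Ioo, ← intervalIntegral.integral_of_le hMT.le]
        rw [intervalIntegral.integral_comp_sub_left (fun x : ℝ => x^(-β)) T]
        rw [sub_self]
        rw [aux_integral_rpow (by linarith : (-1:ℝ) < -β)]
        rw [Real.zero_rpow (by linarith : -β+1 ≠ 0), sub_zero,
          show -β+1 = 1-β by ring]
      have val2 : ∫ ρ in Set.Ioo M T, H2 ρ ≤ (2/(1-β)) * R^(-s-α) := by
        rw [hH2]
        have hc2eq : c2 = 2^β * M^β * M^(-e) * (R^β)⁻¹ := by
          rw [hc2, Real.div_rpow (by positivity) hR.le,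
            Real.mul_rpow (by norm_num : (0:ℝ) ≤ 2) hM0.le, div_eq_mul_inv]
          ring
        calc ∫ ρ in Set.Ioo M T, c2 * (T-ρ)^(-β)
            = c2 * ((T-M)^(1-β)/(1-β)) := by
              rw [MeasureTheory.integral_const_mul, ival]
          _ ≤ c2 * (M^(1-β)/(1-β)) := by
              gcongr
          _ = 2^β * (M^β * M^(-e) * M^(1-β)) * (R^β)⁻¹ / (1-β) := by
              rw [hc2eq]; ring
          _ = 2^β * M^(-(2*s)) * (R^β)⁻¹ / (1-β) := by
              rw [← Real.rpow_add hM0, ← Real.rpow_add hM0,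
                show β + -e + (1-β) = -(2*s) by rw [hedef]; ring]
          _ ≤ 2 * R^(-(2*s)) * (R^β)⁻¹ / (1-β) := by
              have hM2s : M^(-(2*s)) ≤ R^(-(2*s)) :=
                Real.rpow_le_rpow_of_nonpos hR hRM (by linarith)
              have hfac : 2^β * M^(-(2*s)) ≤ 2 * R^(-(2*s)) :=
                mul_le_mul h2le hM2s (Real.rpow_nonneg hM0.le _) (by norm_num)
              have hinv : (0:ℝ) ≤ (R^β)⁻¹ := by positivity
              exact div_le_div₀ (by positivity)
                (mul_le_mul_of_nonneg_right hfac hinv) h1β (le_refl _)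
          _ = (2/(1-β)) * R^(-s-α) := by
              rw [← Real.rpow_neg hR.le, mul_assoc, ← Real.rpow_add hR,
                show -(2*s) + -β = -s-α by rw [hβdef]; ring]
              ring
      calc ∫ ρ in Set.Ioi R, F ρ
          ≤ ∫ ρ in Set.Ioi R, Set.indicator (Ioo R T) G ρ := by
            apply integral_mono_of_nonneg
            · exact (ae_restrict_iff' measurableSet_Ioi).mpr
                (ae_of_all _ (fun ρ hρ => hfnn ρ hρ))
            · exact hIndG
            · exact (ae_restrict_iff' measurableSet_Ioi).mpr
                (ae_of_all _ (fun ρ hρ => hpt ρ hρ))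
        _ = ∫ ρ in Set.Ioo R T, G ρ := by
            rw [setIntegral_indicator measurableSet_Ioo,
              Set.inter_eq_right.mpr Ioo_subset_Ioi_self]
        _ ≤ ∫ ρ in Set.Ioo R T, (H1 ρ + Set.indicator (Ioo M T) H2 ρ) :=
            setIntegral_mono_on hIG hsum measurableSet_Ioo hbd
        _ = (∫ ρ in Set.Ioo R T, H1 ρ) +
              ∫ ρ in Set.Ioo R T, Set.indicator (Ioo M T) H2 ρ :=
            integral_add hIH1' hIndH2.integrableOn
        _ ≤ (∫ ρ in Set.Ioi R, H1 ρ) + ∫ ρ in Set.Ioo M T, H2 ρ := by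
            apply add_le_add
            · apply setIntegral_mono_set hIH1
              · refine (ae_restrict_iff' measurableSet_Ioi).mpr
                  (ae_of_all _ (fun ρ hρ => ?_))
                have hρ0 : 0 < ρ := lt_trans hR hρ
                rw [hH1]; positivity
              · exact HasSubset.Subset.eventuallyLE Ioo_subset_Ioi_self
            · rw [setIntegral_indicator measurableSet_Ioo,
                Set.inter_eq_right.mpr (Set.Ioo_subset_Ioo_left hRM)]
        _ ≤ (1/s) * R^(-s-α) + (2/(1-β)) * R^(-s-α) := add_le_add val1 val2
        _ ≤ (1/s + 2/(1-β) + 1) * R^(-s-α) := by nlinarith [hRpow]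
end

section
/- Let s ∈ (0,1) and α ∈ [s, 1+s). Let Ω ⊂ ℝⁿ be a convex open set with B_R(p) ⊆ Ω for some p ∈ ℝⁿ, R > 0, and let ω ∈ S^{n−1}. Then ∫_R^∞ χ_Ω(p+ρω) / (d(p+ρω)^{α−s} ρ^{1+2s}) dρ ≤ C R^{−s−α}, with C depending only on α, n, s. -/
open Metric MeasureTheory Set

section Aux

variable {E : Type*} [NormedAddCommGroup E] [NormedSpace ℝ E]

lemma aux_hull_ball {Ω : Set E} (hconv : Convex ℝ Ω) {p : E} {R : ℝ}
    (hball : Metric.ball p R ⊆ Ω) {y : E} (hy : y ∈ Ω) {t : ℝ}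
    (ht0 : 0 ≤ t) (ht1 : t ≤ 1) :
    Metric.ball (p + t • (y - p)) ((1 - t) * R) ⊆ Ω := by
  intro z hz
  rcases eq_or_lt_of_le ht1 with h1 | h1
  · exfalso
    rw [mem_ball, ← h1] at hz
    simp at hz
    exact (dist_nonneg.trans_lt hz).false
  · have h1t : 0 < 1 - t := by linarith
    set x := p + t • (y - p) with hx
    set w := p + (1 - t)⁻¹ • (z - x) with hw
    have hwball : w ∈ Metric.ball p R := by
      rw [mem_ball, hw, dist_self_add_left, norm_smul, Real.norm_eq_abs,
        abs_of_pos (inv_pos.2 h1t), ← dist_eq_norm]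
      rw [inv_mul_lt_iff₀ h1t]
      calc dist z x < (1 - t) * R := hz
        _ ≤ (1 - t) * R := le_rfl
    have hzeq : z = (1 - t) • w + t • y := by
      rw [hw, smul_add, smul_inv_smul₀ (ne_of_gt h1t), hx]
      module
    rw [hzeq]
    exact hconv (hball hwball) hy h1t.le ht0 (by ring)

lemma aux_infDist_ge {Ω : Set E} (hopen : IsOpen Ω) (hfr : (frontier Ω).Nonempty)
    {x : E} {r : ℝ} (hb : Metric.ball x r ⊆ Ω) :
    r ≤ Metric.infDist x (frontier Ω) := by
  by_contra hcon
  push_neg at hcon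
  obtain ⟨y, hyF, hyd⟩ := (infDist_lt_iff hfr).1 hcon
  have hyΩ : y ∈ Ω := hb (by rwa [mem_ball, dist_comm])
  rw [hopen.frontier_eq] at hyF
  exact hyF.2 hyΩ

end Aux

set_option maxHeartbeats 2000000 in
/-- Lemma (convex domains, one base point): for `s ∈ (0,1)`, `α ∈ [s, 1+s)`,
`Ω` convex open with `B_R(p) ⊆ Ω`, and `ω ∈ S^{n-1}`,
`∫_R^∞ χ_Ω(p+ρω) d(p+ρω)^{s-α} ρ^{-1-2s} dρ ≤ C R^{-s-α}`,
with `C` depending only on `α, n, s`. -/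
theorem convex_weighted_line_integral
    (n : ℕ) (s α : ℝ) (hs : s ∈ Set.Ioo (0 : ℝ) 1)
    (hα : α ∈ Set.Ico s (1 + s)) :
    ∃ C > 0, ∀ (Ω : Set (EuclideanSpace ℝ (Fin n)))
      (p ω : EuclideanSpace ℝ (Fin n)) (R : ℝ),
      Convex ℝ Ω → IsOpen Ω → 0 < R → ‖ω‖ = 1 →
      Metric.ball p R ⊆ Ω →
      (∫ ρ in Set.Ioi R,
          Set.indicator Ω (fun _ => (1 : ℝ)) (p + ρ • ω) /
            ((Metric.infDist (p + ρ • ω) (frontier Ω)) ^ (α - s) *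
              ρ ^ (1 + 2 * s)))
        ≤ C * R ^ (-s - α) := by
  obtain ⟨hs0, hs1⟩ := hs
  obtain ⟨hαs, hα1⟩ := hα
  have hc : (-1 : ℝ) < s - α := by linarith
  have hc0 : s - α ≤ 0 := by linarith
  have hexp : -(1 + 2 * s) < (-1 : ℝ) := by linarith
  have h1sα : (0 : ℝ) < 1 + s - α := by linarith
  refine ⟨1 / s + 2 ^ (1 + 2 * s) / (1 + s - α),
    add_pos (by positivity) (div_pos (Real.rpow_pos_of_pos two_pos _) h1sα), ?_⟩
  intro Ω p ω R hconv hopen hR hω hball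
  -- notation
  have hρpos : ∀ ρ : ℝ, R < ρ → (0 : ℝ) < ρ := fun ρ h => hR.trans h
  -- nonnegativity of integrand
  have hnn : 0 ≤ᵐ[volume.restrict (Set.Ioi R)]
      (fun ρ => Set.indicator Ω (fun _ => (1 : ℝ)) (p + ρ • ω) /
        ((Metric.infDist (p + ρ • ω) (frontier Ω)) ^ (α - s) * ρ ^ (1 + 2 * s))) := by
    filter_upwards [ae_restrict_mem measurableSet_Ioi] with ρ hρ
    exact div_nonneg (Set.indicator_nonneg (fun _ _ => zero_le_one) _)
      (mul_nonneg (Real.rpow_nonneg Metric.infDist_nonneg _)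
        (Real.rpow_nonneg (hρpos ρ hρ).le _))
  -- integrability and value of the main dominating function g₁
  have hg₁i : IntegrableOn (fun ρ : ℝ => 2 * R ^ (s - α) * ρ ^ (-(1 + 2 * s)))
      (Set.Ioi R) volume := (integrableOn_Ioi_rpow_of_lt hexp hR).const_mul _
  have hg₁v : (∫ ρ in Set.Ioi R, 2 * R ^ (s - α) * ρ ^ (-(1 + 2 * s)))
      = 1 / s * R ^ (-s - α) := by
    rw [MeasureTheory.integral_const_mul, integral_Ioi_rpow_of_lt hexp hR,
      show -(1 + 2 * s) + 1 = -(2 * s) by ring,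
      show -s - α = (s - α) + -(2 * s) by ring, Real.rpow_add hR]
    field_simp
  have hCfin : 1 / s * R ^ (-s - α)
      ≤ (1 / s + 2 ^ (1 + 2 * s) / (1 + s - α)) * R ^ (-s - α) := by
    apply mul_le_mul_of_nonneg_right _ (Real.rpow_nonneg hR.le _)
    have h2 : 0 < 2 ^ (1 + 2 * s) / (1 + s - α) :=
      div_pos (Real.rpow_pos_of_pos two_pos _) h1sα
    linarith
  -- shared pointwise bound via g₁
  have hbound : ∀ ρ : ℝ, R < ρ →
      (p + ρ • ω ∈ Ω → R / 2 ≤ Metric.infDist (p + ρ • ω) (frontier Ω) ∨ α = s) →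
      Set.indicator Ω (fun _ => (1 : ℝ)) (p + ρ • ω) /
          ((Metric.infDist (p + ρ • ω) (frontier Ω)) ^ (α - s) * ρ ^ (1 + 2 * s))
        ≤ 2 * R ^ (s - α) * ρ ^ (-(1 + 2 * s)) := by
    intro ρ hρ hyp
    have hρ0 : (0 : ℝ) < ρ := hρpos ρ hρ
    have hρp : (0 : ℝ) < ρ ^ (1 + 2 * s) := Real.rpow_pos_of_pos hρ0 _
    by_cases hmem : p + ρ • ω ∈ Ω
    · rw [Set.indicator_of_mem hmem]
      rcases hyp hmem with hd | hα'
      · set D := Metric.infDist (p + ρ • ω) (frontier Ω) with hD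
        have hR2 : (0 : ℝ) < R / 2 := by linarith
        have hDpow : (R / 2) ^ (α - s) ≤ D ^ (α - s) :=
          Real.rpow_le_rpow hR2.le hd (by linarith)
        have hDpow0 : (0 : ℝ) < (R / 2) ^ (α - s) := Real.rpow_pos_of_pos hR2 _
        have step1 : (1 : ℝ) / (D ^ (α - s) * ρ ^ (1 + 2 * s))
            ≤ 1 / ((R / 2) ^ (α - s) * ρ ^ (1 + 2 * s)) := by
          apply one_div_le_one_div_of_le (by positivity)
          exact mul_le_mul_of_nonneg_right hDpow hρp.le
        have step2 : (1 : ℝ) / ((R / 2) ^ (α - s) * ρ ^ (1 + 2 * s))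
            = (R / 2) ^ (s - α) * ρ ^ (-(1 + 2 * s)) := by
          rw [show s - α = -(α - s) by ring, Real.rpow_neg hR2.le,
            Real.rpow_neg hρ0.le, one_div, mul_inv]
        have step3 : (R / 2) ^ (s - α) ≤ 2 * R ^ (s - α) := by
          rw [Real.div_rpow hR.le (by norm_num), div_le_iff₀ (Real.rpow_pos_of_pos two_pos _)]
          have h21 : (1 : ℝ) ≤ 2 ^ (1 + (s - α)) :=
            Real.one_le_rpow one_le_two (by linarith)
          calc R ^ (s - α) = R ^ (s - α) * 1 := by ring
            _ ≤ R ^ (s - α) * 2 ^ (1 + (s - α)) :=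
                mul_le_mul_of_nonneg_left h21 (Real.rpow_nonneg hR.le _)
            _ = 2 * R ^ (s - α) * 2 ^ (s - α) := by
                rw [Real.rpow_add two_pos, Real.rpow_one]; ring
        calc (1 : ℝ) / (D ^ (α - s) * ρ ^ (1 + 2 * s))
            ≤ 1 / ((R / 2) ^ (α - s) * ρ ^ (1 + 2 * s)) := step1
          _ = (R / 2) ^ (s - α) * ρ ^ (-(1 + 2 * s)) := step2
          _ ≤ 2 * R ^ (s - α) * ρ ^ (-(1 + 2 * s)) :=
              mul_le_mul_of_nonneg_right step3 (Real.rpow_nonneg hρ0.le _)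
      · rw [hα', sub_self, Real.rpow_zero, one_mul, Real.rpow_neg hρ0.le, one_div,
          Real.rpow_zero]
        have hpos : (0:ℝ) ≤ (ρ ^ (1 + 2 * s))⁻¹ := inv_nonneg.2 hρp.le
        linarith
    · rw [Set.indicator_of_notMem hmem, zero_div]
      have : (0:ℝ) ≤ ρ ^ (-(1 + 2 * s)) := Real.rpow_nonneg hρ0.le _
      have : (0:ℝ) ≤ R ^ (s - α) := Real.rpow_nonneg hR.le _
      positivity
  -- case on frontier empty
  rcases Set.eq_empty_or_nonempty (frontier Ω) with hfe | hfr
  · by_cases has : α = s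
    · calc (∫ ρ in Set.Ioi R,
            Set.indicator Ω (fun _ => (1 : ℝ)) (p + ρ • ω) /
              ((Metric.infDist (p + ρ • ω) (frontier Ω)) ^ (α - s) * ρ ^ (1 + 2 * s)))
          ≤ ∫ ρ in Set.Ioi R, 2 * R ^ (s - α) * ρ ^ (-(1 + 2 * s)) := by
            apply integral_mono_of_nonneg hnn hg₁i
            filter_upwards [ae_restrict_mem measurableSet_Ioi] with ρ hρ
            exact hbound ρ hρ (fun _ => Or.inr has)
        _ = 1 / s * R ^ (-s - α) := hg₁v
        _ ≤ _ := hCfin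
    · have hne : α - s ≠ 0 := sub_ne_zero.2 has
      simp only [hfe, Metric.infDist_empty, Real.zero_rpow hne, zero_mul, div_zero,
        integral_zero]
      positivity
  -- frontier nonempty
  · -- the hull distance bound
    have hdist : ∀ ρ' : ℝ, p + ρ' • ω ∈ Ω → ∀ ρ : ℝ, 0 ≤ ρ → ρ ≤ ρ' →
        (1 - ρ / ρ') * R ≤ Metric.infDist (p + ρ • ω) (frontier Ω) := by
      intro ρ' hρ' ρ hρ0 hρρ'
      rcases eq_or_lt_of_le hρ0 with h0 | hρpos'
      · rw [← h0]
        simp only [zero_div, sub_zero, zero_smul, add_zero, one_mul]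
        exact aux_infDist_ge hopen hfr hball
      · have hρ'pos : (0 : ℝ) < ρ' := lt_of_lt_of_le hρpos' hρρ'
        have ht0 : (0 : ℝ) ≤ ρ / ρ' := by positivity
        have ht1 : ρ / ρ' ≤ 1 := by rw [div_le_one hρ'pos]; exact hρρ'
        have hb := aux_hull_ball hconv hball hρ' ht0 ht1
        have heq : p + (ρ / ρ') • (p + ρ' • ω - p) = p + ρ • ω := by
          rw [add_sub_cancel_left, smul_smul, div_mul_cancel₀ ρ (ne_of_gt hρ'pos)]
        rw [heq] at hb
        exact aux_infDist_ge hopen hfr hb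
    by_cases hbdd : BddAbove {ρ : ℝ | p + ρ • ω ∈ Ω}
    · -- bounded case
      set S := {ρ : ℝ | p + ρ • ω ∈ Ω} with hSdef
      have hmemS : ∀ r : ℝ, 0 ≤ r → r < R → r ∈ S := by
        intro r hr0 hrR
        show p + r • ω ∈ Ω
        apply hball
        rw [mem_ball, dist_self_add_left, norm_smul, Real.norm_eq_abs, hω,
          mul_one, abs_of_nonneg hr0]
        exact hrR
      have hS0 : (0 : ℝ) ∈ S := hmemS 0 le_rfl hR
      have hSne : S.Nonempty := ⟨0, hS0⟩
      set ρ₀ := sSup S with hρ₀def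
      have hρ₀0 : 0 ≤ ρ₀ := le_csSup hbdd hS0
      have hρ₀R : R ≤ ρ₀ := by
        by_contra hcon
        push_neg at hcon
        have hmid : (ρ₀ + R) / 2 ∈ S := hmemS _ (by linarith) (by linarith)
        have := le_csSup hbdd hmid
        linarith
      have hρ₀pos : 0 < ρ₀ := lt_of_lt_of_le hR hρ₀R
      have hSopen : IsOpen S := by
        apply hopen.preimage (f := fun ρ : ℝ => p + ρ • ω)
        exact continuous_const.add (continuous_id.smul continuous_const)
      have hρ₀notS : ρ₀ ∉ S := by
        intro hmem
        obtain ⟨ε, hε, hbsub⟩ := Metric.isOpen_iff.1 hSopen ρ₀ hmem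
        have : ρ₀ + ε / 2 ∈ S := by
          apply hbsub
          rw [mem_ball, Real.dist_eq]
          rw [show ρ₀ + ε / 2 - ρ₀ = ε / 2 by ring, abs_of_pos (by linarith)]
          linarith
        have := le_csSup hbdd this
        linarith
      have hSlt : ∀ ρ ∈ S, ρ < ρ₀ :=
        fun ρ hρ => lt_of_le_of_ne (le_csSup hbdd hρ) (fun he => hρ₀notS (he ▸ hρ))
      -- distance bound via sup
      have hd2 : ∀ ρ : ℝ, ρ ∈ S → 0 < ρ →
          (1 - ρ / ρ₀) * R ≤ Metric.infDist (p + ρ • ω) (frontier Ω) := by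
        intro ρ hρS hρpos'
        apply le_of_forall_pos_le_add
        intro ε hε
        obtain ⟨ρ', hρ'S, hρ'gt⟩ := exists_lt_of_lt_csSup hSne
          (show ρ₀ - ε < ρ₀ by linarith)
        set ρ'' := max ρ' ρ with hρ''def
        have hρ''S : ρ'' ∈ S := by
          rcases le_total ρ' ρ with h | h
          · rw [hρ''def, max_eq_right h]; exact hρS
          · rw [hρ''def, max_eq_left h]; exact hρ'S
        have hρρ'' : ρ ≤ ρ'' := le_max_right _ _
        have hρ''pos : 0 < ρ'' := lt_of_lt_of_le hρpos' hρρ''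
        have hρ''lt : ρ'' < ρ₀ := hSlt _ hρ''S
        have hρ''gt : ρ₀ - ε < ρ'' := lt_of_lt_of_le hρ'gt (le_max_left _ _)
        have h1 := hdist ρ'' hρ''S ρ hρpos'.le hρρ''
        have h4 : ρ / ρ'' - ρ / ρ₀ ≤ ε / ρ₀ := by
          rw [div_sub_div _ _ (ne_of_gt hρ''pos) (ne_of_gt hρ₀pos),
            div_le_div_iff₀ (by positivity) hρ₀pos]
          have hmul : ρ * (ρ₀ - ρ'') ≤ ρ'' * ε :=
            mul_le_mul hρρ'' (by linarith) (by linarith) hρ''pos.le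
          nlinarith [hmul, hρ₀pos]
        have h5 : (ρ / ρ'' - ρ / ρ₀) * R ≤ ε / ρ₀ * R :=
          mul_le_mul_of_nonneg_right h4 hR.le
        have h6 : ε / ρ₀ * R ≤ ε := by
          rw [div_mul_eq_mul_div, div_le_iff₀ hρ₀pos]
          nlinarith
        linarith
      -- pointwise domination
      set K := (ρ₀ / 2) ^ (-(1 + 2 * s)) with hKdef
      set h2fun := fun ρ : ℝ => (R * (ρ₀ - ρ) / ρ₀) ^ (s - α) * K with h2def
      set g := fun ρ : ℝ => 2 * R ^ (s - α) * ρ ^ (-(1 + 2 * s)) +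
        Set.indicator (Set.Ioo (ρ₀ / 2) ρ₀) h2fun ρ with hgdef
      have hK0 : 0 ≤ K := Real.rpow_nonneg (by positivity) _
      have h2nonneg : ∀ ρ ∈ Set.Ioo (ρ₀ / 2) ρ₀, 0 ≤ h2fun ρ := by
        intro ρ hρ
        exact mul_nonneg (Real.rpow_nonneg (by
          have := hρ.2
          have : (0:ℝ) ≤ ρ₀ - ρ := by linarith
          positivity) _) hK0
      have hind_nonneg : ∀ ρ : ℝ, 0 ≤ Set.indicator (Set.Ioo (ρ₀ / 2) ρ₀) h2fun ρ :=
        fun ρ => Set.indicator_nonneg h2nonneg ρ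
      have hpt : ∀ ρ : ℝ, ρ ∈ Set.Ioi R →
          Set.indicator Ω (fun _ => (1 : ℝ)) (p + ρ • ω) /
            ((Metric.infDist (p + ρ • ω) (frontier Ω)) ^ (α - s) * ρ ^ (1 + 2 * s))
          ≤ g ρ := by
        intro ρ hρ
        have hρR : R < ρ := hρ
        have hρ0 : (0 : ℝ) < ρ := hρpos ρ hρR
        by_cases hmem : p + ρ • ω ∈ Ω
        · have hρS : ρ ∈ S := hmem
          have hρltρ₀ : ρ < ρ₀ := hSlt _ hρS
          by_cases hhalf : ρ ≤ ρ₀ / 2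
          · -- use g₁ part
            have hdge : R / 2 ≤ Metric.infDist (p + ρ • ω) (frontier Ω) := by
              have h1 := hd2 ρ hρS hρ0
              have hfrac : ρ / ρ₀ ≤ 1 / 2 := by
                rw [div_le_div_iff₀ hρ₀pos (by norm_num : (0:ℝ) < 2)]
                linarith
              nlinarith
            have := hbound ρ hρR (fun _ => Or.inl hdge)
            have h0 := hind_nonneg ρ
            rw [hgdef]
            dsimp only
            linarith
          · -- use indicator part
            push_neg at hhalf
            have hρIoo : ρ ∈ Set.Ioo (ρ₀ / 2) ρ₀ := ⟨hhalf, hρltρ₀⟩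
            set D := Metric.infDist (p + ρ • ω) (frontier Ω) with hD
            have hb : R * (ρ₀ - ρ) / ρ₀ ≤ D := by
              have h1 := hd2 ρ hρS hρ0
              have : (1 - ρ / ρ₀) * R = R * (ρ₀ - ρ) / ρ₀ := by
                field_simp
              linarith [h1, le_of_eq this.symm]
            have hbpos : 0 < R * (ρ₀ - ρ) / ρ₀ := by
              have : (0:ℝ) < ρ₀ - ρ := by linarith
              positivity
            have hρ₀2pos : (0:ℝ) < ρ₀ / 2 := by linarith
            have hf_le : Set.indicator Ω (fun _ => (1 : ℝ)) (p + ρ • ω) /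
                (D ^ (α - s) * ρ ^ (1 + 2 * s)) ≤ h2fun ρ := by
              rw [Set.indicator_of_mem hmem]
              have hb1 : (R * (ρ₀ - ρ) / ρ₀) ^ (α - s) ≤ D ^ (α - s) :=
                Real.rpow_le_rpow hbpos.le hb (by linarith)
              have hb2 : (ρ₀ / 2) ^ (1 + 2 * s) ≤ ρ ^ (1 + 2 * s) :=
                Real.rpow_le_rpow hρ₀2pos.le hhalf.le (by linarith)
              have hden : (0:ℝ) < (R * (ρ₀ - ρ) / ρ₀) ^ (α - s) * (ρ₀ / 2) ^ (1 + 2 * s) := by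
                exact mul_pos (Real.rpow_pos_of_pos hbpos _) (Real.rpow_pos_of_pos hρ₀2pos _)
              calc (1:ℝ) / (D ^ (α - s) * ρ ^ (1 + 2 * s))
                  ≤ 1 / ((R * (ρ₀ - ρ) / ρ₀) ^ (α - s) * (ρ₀ / 2) ^ (1 + 2 * s)) := by
                    apply one_div_le_one_div_of_le hden
                    exact mul_le_mul hb1 hb2 (Real.rpow_nonneg hρ₀2pos.le _)
                      (Real.rpow_nonneg Metric.infDist_nonneg _)
                _ = h2fun ρ := by
                    rw [h2def]
                    dsimp only
                    rw [hKdef, show s - α = -(α - s) by ring,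
                      show -(1 + 2 * s) = -((1 + 2 * s)) by ring,
                      Real.rpow_neg hbpos.le, Real.rpow_neg hρ₀2pos.le,
                      one_div, mul_inv]
            rw [hgdef]
            dsimp only
            rw [Set.indicator_of_mem hρIoo]
            have hg1nn : (0:ℝ) ≤ 2 * R ^ (s - α) * ρ ^ (-(1 + 2 * s)) := by
              have : (0:ℝ) ≤ R ^ (s - α) := Real.rpow_nonneg hR.le _
              have : (0:ℝ) ≤ ρ ^ (-(1 + 2 * s)) := Real.rpow_nonneg hρ0.le _
              positivity
            linarith [hf_le]
        · rw [Set.indicator_of_notMem hmem, zero_div]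
          rw [hgdef]
          dsimp only
          have hg1nn : (0:ℝ) ≤ 2 * R ^ (s - α) * ρ ^ (-(1 + 2 * s)) := by
            have : (0:ℝ) ≤ R ^ (s - α) := Real.rpow_nonneg hR.le _
            have : (0:ℝ) ≤ ρ ^ (-(1 + 2 * s)) := Real.rpow_nonneg hρ0.le _
            positivity
          linarith [hind_nonneg ρ]
      -- integrability of the second piece
      have hab : ρ₀ / 2 ≤ ρ₀ := by linarith
      have hHint : IntegrableOn (fun ρ : ℝ => (ρ₀ - ρ) ^ (s - α))
          (Set.Ioo (ρ₀ / 2) ρ₀) volume := by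
        have i1 : IntervalIntegrable (fun u : ℝ => u ^ (s - α)) volume 0 (ρ₀ / 2) :=
          intervalIntegral.intervalIntegrable_rpow' hc
        have i2 := i1.comp_sub_left ρ₀
        rw [sub_zero, show ρ₀ - ρ₀ / 2 = ρ₀ / 2 by ring] at i2
        have i3 := i2.symm
        rw [intervalIntegrable_iff_integrableOn_Ioc_of_le hab] at i3
        exact i3.mono_set Set.Ioo_subset_Ioc_self
      have hHint2 : IntegrableOn (fun ρ : ℝ => (R / ρ₀) ^ (s - α) * K * (ρ₀ - ρ) ^ (s - α))
          (Set.Ioo (ρ₀ / 2) ρ₀) volume := hHint.const_mul _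
      have hEq : Set.EqOn (fun ρ : ℝ => (R / ρ₀) ^ (s - α) * K * (ρ₀ - ρ) ^ (s - α)) h2fun
          (Set.Ioo (ρ₀ / 2) ρ₀) := by
        intro ρ hρ
        have hsub : (0:ℝ) ≤ ρ₀ - ρ := by linarith [hρ.2]
        rw [h2def]
        dsimp only
        rw [show R * (ρ₀ - ρ) / ρ₀ = (R / ρ₀) * (ρ₀ - ρ) by ring,
          Real.mul_rpow (by positivity) hsub]
        ring
      have h2int : IntegrableOn h2fun (Set.Ioo (ρ₀ / 2) ρ₀) volume :=
        hHint2.congr_fun hEq measurableSet_Ioo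
      have h2indint : Integrable (Set.indicator (Set.Ioo (ρ₀ / 2) ρ₀) h2fun) volume :=
        h2int.integrable_indicator measurableSet_Ioo
      have hgint : IntegrableOn g (Set.Ioi R) volume :=
        hg₁i.add (h2indint.integrableOn)
      -- the integral of the second piece
      have hrpow_int : (∫ ρ in Set.Ioo (ρ₀ / 2) ρ₀, (ρ₀ - ρ) ^ (s - α))
          = (ρ₀ / 2) ^ (s - α + 1) / (s - α + 1) := by
        rw [← MeasureTheory.integral_Ioc_eq_integral_Ioo,
          ← intervalIntegral.integral_of_le hab,
          intervalIntegral.integral_comp_sub_left (fun u : ℝ => u ^ (s - α)) ρ₀,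
          sub_self, show ρ₀ - ρ₀ / 2 = ρ₀ / 2 by ring,
          integral_rpow (Or.inl hc),
          Real.zero_rpow (by linarith : s - α + 1 ≠ 0), sub_zero]
      have hT : (∫ ρ in Set.Ioi R, Set.indicator (Set.Ioo (ρ₀ / 2) ρ₀) h2fun ρ)
          ≤ 2 ^ (1 + 2 * s) / (1 + s - α) * R ^ (-s - α) := by
        have e1 : (∫ ρ in Set.Ioi R, Set.indicator (Set.Ioo (ρ₀ / 2) ρ₀) h2fun ρ)
            = ∫ ρ in Set.Ioi R ∩ Set.Ioo (ρ₀ / 2) ρ₀, h2fun ρ :=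
          MeasureTheory.setIntegral_indicator measurableSet_Ioo
        have e2 : (∫ ρ in Set.Ioi R ∩ Set.Ioo (ρ₀ / 2) ρ₀, h2fun ρ)
            ≤ ∫ ρ in Set.Ioo (ρ₀ / 2) ρ₀, h2fun ρ := by
          apply MeasureTheory.setIntegral_mono_set h2int
          · filter_upwards [ae_restrict_mem measurableSet_Ioo] with ρ hρ
            exact h2nonneg ρ hρ
          · exact HasSubset.Subset.eventuallyLE Set.inter_subset_right
        have e3 : (∫ ρ in Set.Ioo (ρ₀ / 2) ρ₀, h2fun ρ)
            = (R / ρ₀) ^ (s - α) * K * ((ρ₀ / 2) ^ (s - α + 1) / (s - α + 1)) := by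
          rw [MeasureTheory.setIntegral_congr_fun measurableSet_Ioo hEq.symm,
            MeasureTheory.integral_const_mul, hrpow_int]
        -- final numeric estimate
        have hden : (0:ℝ) < s - α + 1 := by linarith
        have hsum : (R / ρ₀) ^ (s - α) * K * (ρ₀ / 2) ^ (s - α + 1)
            = R ^ (s - α) * (ρ₀ ^ (2 * s))⁻¹ * (2 ^ (2 * s) / 2 ^ (s - α)) := by
          have b1 : ((ρ₀ / 2 : ℝ)) ^ (-(1 + 2 * s))
              = (ρ₀ * ρ₀ ^ (2 * s) / (2 * 2 ^ (2 * s)))⁻¹ := by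
            rw [Real.rpow_neg (by positivity), Real.div_rpow hρ₀pos.le (by norm_num)]
            congr 1
            rw [Real.rpow_add hρ₀pos, Real.rpow_one,
              Real.rpow_add two_pos, Real.rpow_one]
          have b2 : ((ρ₀ / 2 : ℝ)) ^ (s - α + 1) = ρ₀ ^ (s - α) * ρ₀ / (2 ^ (s - α) * 2) := by
            rw [Real.div_rpow hρ₀pos.le (by norm_num), Real.rpow_add hρ₀pos,
              Real.rpow_one, Real.rpow_add two_pos, Real.rpow_one]
          rw [hKdef, Real.div_rpow hR.le hρ₀pos.le, b1, b2]
          have n1 : (ρ₀ : ℝ) ≠ 0 := ne_of_gt hρ₀pos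
          have n2 : (ρ₀ : ℝ) ^ (2 * s) ≠ 0 := ne_of_gt (Real.rpow_pos_of_pos hρ₀pos _)
          have n3 : (ρ₀ : ℝ) ^ (s - α) ≠ 0 := ne_of_gt (Real.rpow_pos_of_pos hρ₀pos _)
          have n4 : (2 : ℝ) ^ (2 * s) ≠ 0 := ne_of_gt (Real.rpow_pos_of_pos two_pos _)
          have n5 : (2 : ℝ) ^ (s - α) ≠ 0 := ne_of_gt (Real.rpow_pos_of_pos two_pos _)
          field_simp
        have e4 : (R / ρ₀) ^ (s - α) * K * ((ρ₀ / 2) ^ (s - α + 1) / (s - α + 1))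
            ≤ 2 ^ (1 + 2 * s) / (1 + s - α) * R ^ (-s - α) := by
          have k1 : (ρ₀ : ℝ) ^ (2 * s) ≥ R ^ (2 * s) :=
            Real.rpow_le_rpow hR.le hρ₀R (by linarith)
          have k2 : (2 : ℝ) ^ (2 * s) / 2 ^ (s - α) ≤ 2 ^ (1 + 2 * s) := by
            rw [← Real.rpow_sub two_pos]
            exact Real.rpow_le_rpow_of_exponent_le one_le_two (by linarith)
          have hA : R ^ (s - α) * (ρ₀ ^ (2 * s))⁻¹ * (2 ^ (2 * s) / 2 ^ (s - α))
              ≤ 2 ^ (1 + 2 * s) * R ^ (-s - α) := by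
            have hRp : (0:ℝ) < R ^ (2 * s) := Real.rpow_pos_of_pos hR _
            have k1' : (ρ₀ ^ (2 * s) : ℝ)⁻¹ ≤ (R ^ (2 * s))⁻¹ :=
              inv_anti₀ hRp k1
            calc R ^ (s - α) * (ρ₀ ^ (2 * s))⁻¹ * (2 ^ (2 * s) / 2 ^ (s - α))
                ≤ R ^ (s - α) * (R ^ (2 * s))⁻¹ * 2 ^ (1 + 2 * s) := by
                  apply mul_le_mul (mul_le_mul_of_nonneg_left k1'
                    (Real.rpow_nonneg hR.le _)) k2
                  · positivity
                  · have h1 : (0:ℝ) ≤ R ^ (s - α) := Real.rpow_nonneg hR.le _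
                    positivity
              _ = 2 ^ (1 + 2 * s) * R ^ (-s - α) := by
                  rw [← Real.rpow_neg hR.le, ← Real.rpow_add hR,
                    show s - α + -(2 * s) = -s - α by ring]
                  ring
          rw [div_mul_eq_mul_div, ← mul_div_assoc,
            show (1:ℝ) + s - α = s - α + 1 by ring]
          rw [div_le_div_iff_of_pos_right hden, hsum]
          exact hA
        calc (∫ ρ in Set.Ioi R, Set.indicator (Set.Ioo (ρ₀ / 2) ρ₀) h2fun ρ)
            = ∫ ρ in Set.Ioi R ∩ Set.Ioo (ρ₀ / 2) ρ₀, h2fun ρ := e1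
          _ ≤ ∫ ρ in Set.Ioo (ρ₀ / 2) ρ₀, h2fun ρ := e2
          _ = (R / ρ₀) ^ (s - α) * K * ((ρ₀ / 2) ^ (s - α + 1) / (s - α + 1)) := e3
          _ ≤ 2 ^ (1 + 2 * s) / (1 + s - α) * R ^ (-s - α) := e4
      -- put everything together
      calc (∫ ρ in Set.Ioi R,
            Set.indicator Ω (fun _ => (1 : ℝ)) (p + ρ • ω) /
              ((Metric.infDist (p + ρ • ω) (frontier Ω)) ^ (α - s) * ρ ^ (1 + 2 * s)))
          ≤ ∫ ρ in Set.Ioi R, g ρ := by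
            apply integral_mono_of_nonneg hnn hgint
            filter_upwards [ae_restrict_mem measurableSet_Ioi] with ρ hρ
            exact hpt ρ hρ
        _ = (∫ ρ in Set.Ioi R, 2 * R ^ (s - α) * ρ ^ (-(1 + 2 * s))) +
            ∫ ρ in Set.Ioi R, Set.indicator (Set.Ioo (ρ₀ / 2) ρ₀) h2fun ρ := by
            rw [hgdef]
            exact MeasureTheory.integral_add hg₁i h2indint.integrableOn
        _ ≤ 1 / s * R ^ (-s - α) + 2 ^ (1 + 2 * s) / (1 + s - α) * R ^ (-s - α) := by
            rw [hg₁v]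
            exact add_le_add le_rfl hT
        _ = (1 / s + 2 ^ (1 + 2 * s) / (1 + s - α)) * R ^ (-s - α) := by ring
    · -- unbounded case
      have hdR : ∀ ρ : ℝ, 0 < ρ → p + ρ • ω ∈ Ω →
          R ≤ Metric.infDist (p + ρ • ω) (frontier Ω) := by
        intro ρ hρ0 hmem
        apply le_of_forall_pos_le_add
        intro ε hε
        rw [not_bddAbove_iff] at hbdd
        obtain ⟨ρ', hρ'S, hρ'gt⟩ := hbdd (max ρ (ρ * R / ε))
        have hρρ' : ρ ≤ ρ' := le_of_lt (lt_of_le_of_lt (le_max_left _ _) hρ'gt)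
        have hρ'pos : 0 < ρ' := lt_of_lt_of_le hρ0 hρρ'
        have h1 := hdist ρ' hρ'S ρ hρ0.le hρρ'
        have h2 : ρ * R / ε < ρ' := lt_of_le_of_lt (le_max_right _ _) hρ'gt
        have hq : ρ / ρ' * R ≤ ε := by
          rw [div_mul_eq_mul_div, div_le_iff₀ hρ'pos]
          have := (div_lt_iff₀ hε).1 h2
          nlinarith
        calc R = (1 - ρ / ρ') * R + ρ / ρ' * R := by ring
          _ ≤ Metric.infDist (p + ρ • ω) (frontier Ω) + ε := add_le_add h1 hq
      calc (∫ ρ in Set.Ioi R,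
            Set.indicator Ω (fun _ => (1 : ℝ)) (p + ρ • ω) /
              ((Metric.infDist (p + ρ • ω) (frontier Ω)) ^ (α - s) * ρ ^ (1 + 2 * s)))
          ≤ ∫ ρ in Set.Ioi R, 2 * R ^ (s - α) * ρ ^ (-(1 + 2 * s)) := by
            apply integral_mono_of_nonneg hnn hg₁i
            filter_upwards [ae_restrict_mem measurableSet_Ioi] with ρ hρ
            apply hbound ρ hρ
            intro hmem
            left
            have := hdR ρ (hρpos ρ hρ) hmem
            linarith
        _ = 1 / s * R ^ (-s - α) := hg₁v
        _ ≤ _ := hCfin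
end

section
/- For s ∈ (0,1) and α ∈ [s, 1+s), the function ψ(μ) = μ^{2s} ∫_μ^1 dt / ((1−t)^{α−s} t^{1+2s}) is bounded on (0,1]: there exists C > 0 (depending on s, α) with sup_{μ∈(0,1]} ψ(μ) ≤ C. Moreover ψ(μ) → 1/(2s) as μ → 0⁺. -/
open MeasureTheory Set Filter

private lemma psi_meas (b c : ℝ) :
    Measurable fun t : ℝ => 1 / ((1 - t) ^ b * t ^ c) := by
  fun_prop

private lemma g_int (b : ℝ) (hb : b < 1) (a : ℝ) :
    IntervalIntegrable (fun t : ℝ => (1 - t) ^ (-b)) volume a 1 := by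
  have h : IntervalIntegrable (fun x : ℝ => x ^ (-b)) volume (1 - a) (1 - 1) :=
    intervalIntegral.intervalIntegrable_rpow' (by linarith)
  simpa using h.comp_sub_left 1

private lemma psi_int {b c : ℝ} (hb : b < 1) (hc : 0 < c) {a : ℝ} (ha : 0 < a) (ha1 : a ≤ 1) :
    IntervalIntegrable (fun t : ℝ => 1 / ((1 - t) ^ b * t ^ c)) volume a 1 := by
  refine IntervalIntegrable.mono_fun' (g := fun t => a ^ (-c) * (1 - t) ^ (-b))
    ((g_int b hb a).const_mul _) ((psi_meas b c).aestronglyMeasurable) ?_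
  have h1 : ∀ᵐ x ∂(volume.restrict (Set.uIoc a 1)), x ≠ 1 := by
    refine ae_restrict_of_ae ?_
    have h0 : (volume : Measure ℝ) {(1 : ℝ)} = 0 := measure_singleton 1
    rw [ae_iff]
    convert h0 using 2
    ext x; simp
  filter_upwards [ae_restrict_mem measurableSet_uIoc, h1] with x hx hx1
  rw [uIoc_of_le ha1] at hx
  have hx0 : 0 < x := lt_trans ha hx.1
  have hxlt : x < 1 := lt_of_le_of_ne hx.2 hx1
  have h1x : 0 < 1 - x := by linarith
  have hfx : (1 : ℝ) / ((1 - x) ^ b * x ^ c) = (1 - x) ^ (-b) * x ^ (-c) := by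
    rw [Real.rpow_neg h1x.le, Real.rpow_neg hx0.le, one_div, mul_inv]
  have hnn : 0 ≤ (1 - x) ^ (-b) * x ^ (-c) :=
    mul_nonneg (Real.rpow_nonneg h1x.le _) (Real.rpow_nonneg hx0.le _)
  simp only [Real.norm_eq_abs, hfx, abs_of_nonneg hnn]
  calc (1 - x) ^ (-b) * x ^ (-c) ≤ (1 - x) ^ (-b) * a ^ (-c) := by
        exact mul_le_mul_of_nonneg_left
          (Real.rpow_le_rpow_of_nonpos ha hx.1.le (neg_nonpos.2 hc.le))
          (Real.rpow_nonneg h1x.le _)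
    _ = a ^ (-c) * (1 - x) ^ (-b) := mul_comm _ _

private lemma int_rpow_eval {s μ ν : ℝ} (hs : 0 < s) (hμ : 0 < μ) (hν : 0 < ν) (hμν : μ ≤ ν) :
    ∫ x in μ..ν, x ^ (-(1 + 2 * s)) = (μ ^ (-(2 * s)) - ν ^ (-(2 * s))) / (2 * s) := by
  rw [integral_rpow (Or.inr ⟨by intro h; nlinarith [neg_eq_iff_eq_neg.1 h],
    notMem_uIcc_of_lt hμ hν⟩)]
  have e : -(1 + 2 * s) + 1 = -(2 * s) := by ring
  rw [e, div_neg, ← neg_div, neg_sub]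

/-- For `s ∈ (0,1)` and `α ∈ [s, 1+s)`, the function
`ψ(μ) = μ^{2s} ∫_μ^1 dt / ((1-t)^{α-s} t^{1+2s})` is bounded on `(0,1]`,
and `ψ(μ) → 1/(2s)` as `μ → 0⁺`. -/
theorem psi_bounded_and_limit
    (s α : ℝ) (hs : s ∈ Set.Ioo (0 : ℝ) 1) (hα : α ∈ Set.Ico s (1 + s)) :
    (∃ C > 0, ∀ μ ∈ Set.Ioc (0 : ℝ) 1,
      μ ^ (2 * s) * (∫ t in Set.Ioo μ 1,
        1 / ((1 - t) ^ (α - s) * t ^ (1 + 2 * s))) ≤ C) ∧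
    Filter.Tendsto
      (fun μ : ℝ => μ ^ (2 * s) * (∫ t in Set.Ioo μ 1,
        1 / ((1 - t) ^ (α - s) * t ^ (1 + 2 * s))))
      (nhdsWithin 0 (Set.Ioi 0)) (nhds (1 / (2 * s))) := by
  obtain ⟨hs0, hs1⟩ := hs
  obtain ⟨hα0, hα1⟩ := hα
  have hb0 : 0 ≤ α - s := by linarith
  have hb1 : α - s < 1 := by linarith
  have hs2 : 0 < 2 * s := by linarith
  set F : ℝ → ℝ := fun t => 1 / ((1 - t) ^ (α - s) * t ^ (1 + 2 * s)) with hF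
  -- basic facts
  have hFnonneg : ∀ x, 0 ≤ x → x ≤ 1 → 0 ≤ F x := by
    intro x hx0 hx1
    apply one_div_nonneg.2
    exact mul_nonneg (Real.rpow_nonneg (by linarith) _) (Real.rpow_nonneg hx0 _)
  have hFintI : ∀ a : ℝ, 0 < a → a ≤ 1 → IntervalIntegrable F volume a 1 := by
    intro a ha ha1
    exact psi_int hb1 (by linarith) ha ha1
  have hIoo : ∀ a : ℝ, a ≤ 1 → (∫ t in Ioo a 1, F t) = ∫ t in a..1, F t := by
    intro a ha1
    rw [intervalIntegral.integral_of_le ha1, integral_Ioc_eq_integral_Ioo]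
  have hcancel : ∀ μ : ℝ, 0 < μ → μ ^ (2 * s) * μ ^ (-(2 * s)) = 1 := by
    intro μ hμ
    rw [← Real.rpow_add hμ]
    simp
  have hFeq : ∀ x : ℝ, 0 < x → x < 1 →
      F x = (1 - x) ^ (-(α - s)) * x ^ (-(1 + 2 * s)) := by
    intro x hx0 hx1
    simp only [hF]
    rw [Real.rpow_neg (by linarith), Real.rpow_neg hx0.le, one_div, mul_inv]
  have hrpow_int : ∀ a ν : ℝ, 0 < a → 0 < ν →
      IntervalIntegrable (fun x : ℝ => x ^ (-(1 + 2 * s))) volume a ν := by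
    intro a ν ha hν
    exact intervalIntegral.intervalIntegrable_rpow (Or.inr (notMem_uIcc_of_lt ha hν))
  -- lower bound
  have hlow : ∀ μ : ℝ, 0 < μ → μ ≤ 1 →
      (1 - μ ^ (2 * s)) / (2 * s) ≤ μ ^ (2 * s) * ∫ t in Ioo μ 1, F t := by
    intro μ hμ hμ1
    have e1 : (∫ t in Ioo μ 1, t ^ (-(1 + 2 * s))) = (μ ^ (-(2 * s)) - 1) / (2 * s) := by
      rw [← integral_Ioc_eq_integral_Ioo, ← intervalIntegral.integral_of_le hμ1,
        int_rpow_eval hs0 hμ one_pos hμ1, Real.one_rpow]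
    have hmono : (∫ t in Ioo μ 1, t ^ (-(1 + 2 * s))) ≤ ∫ t in Ioo μ 1, F t := by
      refine setIntegral_mono_on ?_ ?_ measurableSet_Ioo ?_
      · exact (hrpow_int μ 1 hμ one_pos).1.mono_set Ioo_subset_Ioc_self
      · exact (hFintI μ hμ hμ1).1.mono_set Ioo_subset_Ioc_self
      · intro x hx
        have hx0 : 0 < x := lt_trans hμ hx.1
        have h1x : 0 < 1 - x := by linarith [hx.2]
        rw [hFeq x hx0 hx.2]
        have h1 : (1 : ℝ) ≤ (1 - x) ^ (-(α - s)) := by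
          have := Real.rpow_le_rpow_of_exponent_ge h1x (by linarith [hx.2])
            (show -(α - s) ≤ 0 by linarith)
          simpa using this
        nlinarith [Real.rpow_nonneg hx0.le (-(1 + 2 * s)),
          mul_le_mul_of_nonneg_right h1 (Real.rpow_nonneg hx0.le (-(1 + 2 * s)))]
    have key : μ ^ (2 * s) * ((μ ^ (-(2 * s)) - 1) / (2 * s)) = (1 - μ ^ (2 * s)) / (2 * s) := by
      rw [mul_div_assoc', mul_sub, hcancel μ hμ, mul_one]
    calc (1 - μ ^ (2 * s)) / (2 * s)
        = μ ^ (2 * s) * ((μ ^ (-(2 * s)) - 1) / (2 * s)) := key.symm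
      _ = μ ^ (2 * s) * ∫ t in Ioo μ 1, t ^ (-(1 + 2 * s)) := by rw [e1]
      _ ≤ μ ^ (2 * s) * ∫ t in Ioo μ 1, F t :=
          mul_le_mul_of_nonneg_left hmono (Real.rpow_nonneg hμ.le _)
  -- upper bound
  have hupper : ∀ δ : ℝ, 0 < δ → δ < 1 → ∀ μ : ℝ, 0 < μ → μ ≤ δ →
      μ ^ (2 * s) * (∫ t in Ioo μ 1, F t) ≤
        (1 - δ) ^ (-(α - s)) / (2 * s) + μ ^ (2 * s) * ∫ t in δ..1, F t := by
    intro δ hδ hδ1 μ hμ hμδ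
    have hμ1 : μ ≤ 1 := by linarith
    have hI1 : IntervalIntegrable F volume μ δ := by
      refine (hFintI μ hμ hμ1).mono_set ?_
      rw [uIcc_of_le hμδ, uIcc_of_le hμ1]
      exact Icc_subset_Icc le_rfl hδ1.le
    have hI2 : IntervalIntegrable F volume δ 1 := hFintI δ hδ hδ1.le
    have hsplit : (∫ t in μ..1, F t) = (∫ t in μ..δ, F t) + ∫ t in δ..1, F t :=
      (intervalIntegral.integral_add_adjacent_intervals hI1 hI2).symm
    have h1δ : 0 < 1 - δ := by linarith
    have hmid : (∫ t in μ..δ, F t) ≤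
        (1 - δ) ^ (-(α - s)) * ((μ ^ (-(2 * s)) - δ ^ (-(2 * s))) / (2 * s)) := by
      have step : (∫ t in μ..δ, F t) ≤
          ∫ t in μ..δ, (1 - δ) ^ (-(α - s)) * t ^ (-(1 + 2 * s)) := by
        refine intervalIntegral.integral_mono_on hμδ hI1
          ((hrpow_int μ δ hμ hδ).const_mul _) ?_
        intro x hx
        have hx0 : 0 < x := lt_of_lt_of_le hμ hx.1
        have hx1 : x < 1 := lt_of_le_of_lt hx.2 hδ1
        rw [hFeq x hx0 hx1]
        refine mul_le_mul_of_nonneg_right ?_ (Real.rpow_nonneg hx0.le _)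
        exact Real.rpow_le_rpow_of_nonpos h1δ (by linarith [hx.2]) (by linarith)
      rwa [intervalIntegral.integral_const_mul, int_rpow_eval hs0 hμ hδ hμδ] at step
    have htail : 0 ≤ ∫ t in δ..1, F t :=
      intervalIntegral.integral_nonneg hδ1.le
        (fun x hx => hFnonneg x (by linarith [hx.1]) hx.2)
    have hμs : (0:ℝ) ≤ μ ^ (2 * s) := Real.rpow_nonneg hμ.le _
    have key : μ ^ (2 * s) * ((1 - δ) ^ (-(α - s)) * (μ ^ (-(2 * s)) / (2 * s))) =
        (1 - δ) ^ (-(α - s)) / (2 * s) := by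
      have : μ ^ (2 * s) * ((1 - δ) ^ (-(α - s)) * (μ ^ (-(2 * s)) / (2 * s))) =
          (1 - δ) ^ (-(α - s)) * (μ ^ (2 * s) * μ ^ (-(2 * s))) / (2 * s) := by ring
      rw [this, hcancel μ hμ, mul_one]
    have hmid2 : (μ ^ (-(2 * s)) - δ ^ (-(2 * s))) / (2 * s) ≤ μ ^ (-(2 * s)) / (2 * s) := by
      gcongr
      · exact sub_le_self _ (Real.rpow_nonneg hδ.le _)
    calc μ ^ (2 * s) * (∫ t in Ioo μ 1, F t)
        = μ ^ (2 * s) * ((∫ t in μ..δ, F t) + ∫ t in δ..1, F t) := by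
          rw [hIoo μ hμ1, hsplit]
      _ = μ ^ (2 * s) * (∫ t in μ..δ, F t) + μ ^ (2 * s) * ∫ t in δ..1, F t := by ring
      _ ≤ μ ^ (2 * s) * ((1 - δ) ^ (-(α - s)) * (μ ^ (-(2 * s)) / (2 * s)))
            + μ ^ (2 * s) * ∫ t in δ..1, F t := by
          refine add_le_add_left (le_trans (mul_le_mul_of_nonneg_left hmid hμs) ?_) _
          refine mul_le_mul_of_nonneg_left ?_ hμs
          exact mul_le_mul_of_nonneg_left hmid2 (Real.rpow_nonneg h1δ.le _)
      _ = (1 - δ) ^ (-(α - s)) / (2 * s) + μ ^ (2 * s) * ∫ t in δ..1, F t := by rw [key]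
  constructor
  · -- boundedness
    set C : ℝ := (1 - (1/2 : ℝ)) ^ (-(α - s)) / (2 * s) + (∫ t in (1/2 : ℝ)..1, F t) + 1 with hC
    have htail : 0 ≤ ∫ t in (1/2 : ℝ)..1, F t :=
      intervalIntegral.integral_nonneg (by norm_num)
        (fun x hx => hFnonneg x (by linarith [hx.1]) hx.2)
    have hfirst : 0 < (1 - (1/2 : ℝ)) ^ (-(α - s)) / (2 * s) :=
      div_pos (Real.rpow_pos_of_pos (by norm_num) _) hs2
    refine ⟨C, by positivity, ?_⟩
    intro μ hμ
    obtain ⟨hμ0, hμ1⟩ := hμ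
    rcases le_or_gt μ (1/2) with hle | hgt
    · have h := hupper (1/2) (by norm_num) (by norm_num) μ hμ0 hle
      have hpow : μ ^ (2 * s) ≤ 1 := Real.rpow_le_one hμ0.le hμ1 hs2.le
      have : μ ^ (2 * s) * (∫ t in (1/2 : ℝ)..1, F t) ≤ ∫ t in (1/2 : ℝ)..1, F t :=
        mul_le_of_le_one_left htail hpow
      rw [hC]; linarith
    · have hpow : μ ^ (2 * s) ≤ 1 := Real.rpow_le_one hμ0.le hμ1 hs2.le
      have hint_nonneg : 0 ≤ ∫ t in Ioo μ 1, F t := by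
        refine setIntegral_nonneg measurableSet_Ioo ?_
        intro x hx; exact hFnonneg x (by linarith [hx.1]) hx.2.le
      have hmonoset : (∫ t in Ioo μ 1, F t) ≤ ∫ t in Ioo (1/2 : ℝ) 1, F t := by
        refine setIntegral_mono_set
          ((hFintI (1/2) (by norm_num) (by norm_num)).1.mono_set Ioo_subset_Ioc_self) ?_ ?_
        · filter_upwards [ae_restrict_mem measurableSet_Ioo] with x hx
          exact hFnonneg x (by linarith [hx.1]) hx.2.le
        · exact (Ioo_subset_Ioo_left hgt.le).eventuallyLE
      have e : (∫ t in Ioo (1/2 : ℝ) 1, F t) = ∫ t in (1/2 : ℝ)..1, F t :=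
        hIoo (1/2) (by norm_num)
      have : μ ^ (2 * s) * (∫ t in Ioo μ 1, F t) ≤ ∫ t in Ioo μ 1, F t :=
        mul_le_of_le_one_left hint_nonneg hpow
      rw [hC]; rw [e] at hmonoset; linarith
  · -- the limit
    have hpowlim : Tendsto (fun μ : ℝ => μ ^ (2 * s)) (nhdsWithin 0 (Ioi 0)) (nhds 0) := by
      have hc : ContinuousAt (fun μ : ℝ => μ ^ (2 * s)) 0 :=
        Real.continuousAt_rpow_const 0 (2 * s) (Or.inr hs2.le)
      have h := hc.tendsto
      rw [Real.zero_rpow hs2.ne'] at h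
      exact h.mono_left nhdsWithin_le_nhds
    have hmem1 : ∀ᶠ μ in nhdsWithin (0:ℝ) (Ioi 0), μ ∈ Ioi (0:ℝ) :=
      self_mem_nhdsWithin
    rw [tendsto_order]
    constructor
    · intro a ha
      have hLB : Tendsto (fun μ : ℝ => (1 - μ ^ (2 * s)) / (2 * s))
          (nhdsWithin 0 (Ioi 0)) (nhds (1 / (2 * s))) := by
        have h := (tendsto_const_nhds (x := (1:ℝ)) (f := nhdsWithin (0:ℝ) (Ioi 0))).sub hpowlim
        have h2 := h.div_const (2 * s)
        simpa using h2
      have h1 := hLB.eventually (eventually_gt_nhds ha)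
      have h2 : ∀ᶠ μ in nhdsWithin (0:ℝ) (Ioi 0), μ < 1 :=
        (eventually_lt_nhds one_pos).filter_mono nhdsWithin_le_nhds
      filter_upwards [h1, h2, hmem1] with μ k1 k2 k3
      exact lt_of_lt_of_le k1 (hlow μ k3 k2.le)
    · intro bnd hbnd
      set ε : ℝ := bnd - 1 / (2 * s) with hεdef
      have hε : 0 < ε := by rw [hεdef]; linarith
      have hcont : Tendsto (fun δ : ℝ => (1 - δ) ^ (-(α - s)) / (2 * s))
          (nhds 0) (nhds (1 / (2 * s))) := by
        have hc1 : ContinuousAt (fun δ : ℝ => 1 - δ) 0 :=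
          (continuous_const.sub continuous_id).continuousAt
        have hc2 : ContinuousAt (fun x : ℝ => x ^ (-(α - s))) ((fun δ : ℝ => 1 - δ) 0) := by
          simp only [sub_zero]
          exact Real.continuousAt_rpow_const 1 _ (Or.inl one_ne_zero)
        have h1 : ContinuousAt (fun δ : ℝ => (1 - δ) ^ (-(α - s))) 0 := hc2.comp hc1
        have h3 := (h1.div_const (2 * s)).tendsto
        simpa [Real.one_rpow] using h3
      have hev : ∀ᶠ δ in nhds (0:ℝ), (1 - δ) ^ (-(α - s)) / (2 * s) < 1 / (2 * s) + ε / 2 :=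
        hcont.eventually (eventually_lt_nhds (by linarith))
      obtain ⟨δ, ⟨hδprop, hδ1⟩, hδ0⟩ :
          ∃ δ : ℝ, ((1 - δ) ^ (-(α - s)) / (2 * s) < 1 / (2 * s) + ε / 2 ∧ δ < 1) ∧ δ ∈ Ioi (0:ℝ) :=
        (((hev.filter_mono nhdsWithin_le_nhds).and
          ((eventually_lt_nhds one_pos).filter_mono nhdsWithin_le_nhds)).and
          eventually_mem_nhdsWithin).exists
      have hT0 : 0 ≤ ∫ t in δ..1, F t :=
        intervalIntegral.integral_nonneg hδ1.le
          (fun x hx => hFnonneg x (le_trans hδ0.le hx.1) hx.2)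
      have htailto : Tendsto (fun μ : ℝ => μ ^ (2 * s) * ∫ t in δ..1, F t)
          (nhdsWithin 0 (Ioi 0)) (nhds 0) := by
        simpa using hpowlim.mul_const (∫ t in δ..1, F t)
      have h4 := htailto.eventually (eventually_lt_nhds (half_pos hε))
      have h5 : ∀ᶠ μ in nhdsWithin (0:ℝ) (Ioi 0), μ < δ :=
        (eventually_lt_nhds hδ0).filter_mono nhdsWithin_le_nhds
      filter_upwards [h4, h5, hmem1] with μ k4 k5 k6
      have := hupper δ hδ0 hδ1 μ k6 k5.le
      have hfin : 1 / (2 * s) + ε / 2 + ε / 2 = bnd := by rw [hεdef]; ring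
      linarith
end

section
/- Let s ∈ (0,1), β ∈ (0,1) with β + 2s not an integer, and let a be a finite nonnegative measure on S^{n−1} with total mass at most Λ. Define Lv(x) = ∫_0^∞ dρ ∫_{S^{n−1}} da(ω) (2v(x) − v(x+ρω) − v(x−ρω)) / ρ^{1+2s}. If v ∈ C^{β+2s}(ℝⁿ), then Lv ∈ C^β(B₁) with [Lv]_{C^β(B₁)} ≤ C [v]_{C^{β+2s}(ℝⁿ)}, where C depends on n, s, β, Λ. -/
open Metric MeasureTheory Set

set_option maxHeartbeats 2000000
noncomputable section

namespace AnisoAux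

variable {E F : Type*} [NormedAddCommGroup E] [NormedSpace ℝ E]
  [NormedAddCommGroup F] [NormedSpace ℝ F]

lemma norm_sub_le_seg {z w ζ : E} (h : ζ ∈ segment ℝ z w) : ‖ζ - z‖ ≤ ‖w - z‖ := by
  rw [segment_eq_image'] at h
  obtain ⟨t, ht, rfl⟩ := h
  simp only [add_sub_cancel_left, norm_smul, Real.norm_eq_abs,
    abs_of_nonneg ht.1]
  nlinarith [norm_nonneg (w - z), ht.2]

lemma mvt' (f : E → F) (f' : E → E →L[ℝ] F) (hf : ∀ z, HasFDerivAt f (f' z) z)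
    (z h : E) (φ : E →L[ℝ] F) (C : ℝ)
    (hb : ∀ ζ ∈ segment ℝ z (z + h), ‖f' ζ - φ‖ ≤ C) :
    ‖f (z + h) - f z - φ h‖ ≤ C * ‖h‖ := by
  have := (convex_segment z (z + h)).norm_image_sub_le_of_norm_hasFDerivWithin_le'
    (f := f) (f' := f') (φ := φ) (C := C)
    (fun ζ hζ => (hf ζ).hasFDerivWithinAt) hb
    (left_mem_segment ℝ z (z + h)) (right_mem_segment ℝ z (z + h))
  simpa using this

lemma mvt (f : E → F) (f' : E → E →L[ℝ] F) (hf : ∀ z, HasFDerivAt f (f' z) z)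
    (z h : E) (C : ℝ)
    (hb : ∀ ζ ∈ segment ℝ z (z + h), ‖f' ζ‖ ≤ C) :
    ‖f (z + h) - f z‖ ≤ C * ‖h‖ := by
  have := (convex_segment z (z + h)).norm_image_sub_le_of_norm_hasFDerivWithin_le
    (f := f) (f' := f') (C := C)
    (fun ζ hζ => (hf ζ).hasFDerivWithinAt) hb
    (left_mem_segment ℝ z (z + h)) (right_mem_segment ℝ z (z + h))
  simpa using this

lemma hasFDerivAt_shift (f : E → F) (f' : E → E →L[ℝ] F)
    (hf : ∀ z, HasFDerivAt f (f' z) z) (e z : E) :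
    HasFDerivAt (fun w => f (w + e)) (f' (z + e)) z := by
  have h1 : HasFDerivAt (fun w : E => w + e) (ContinuousLinearMap.id ℝ E) z :=
    (hasFDerivAt_id z).add_const e
  simpa [Function.comp_def] using (hf (z + e)).comp z h1

lemma hasFDerivAt_shift_sub (f : E → F) (f' : E → E →L[ℝ] F)
    (hf : ∀ z, HasFDerivAt f (f' z) z) (e z : E) :
    HasFDerivAt (fun w => f (w - e)) (f' (z - e)) z := by
  have h1 : HasFDerivAt (fun w : E => w - e) (ContinuousLinearMap.id ℝ E) z :=
    (hasFDerivAt_id z).sub_const e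
  simpa [Function.comp_def] using (hf (z - e)).comp z h1

end AnisoAux

namespace AnisoAux2
open AnisoAux

variable {E F : Type*} [NormedAddCommGroup E] [NormedSpace ℝ E]
  [NormedAddCommGroup F] [NormedSpace ℝ F]

/-- Second difference bound via Hölder-type control of the derivative near `z`. -/
lemma secondDiff_norm_le (f : E → F) (f' : E → E →L[ℝ] F)
    (hd : ∀ z, HasFDerivAt f (f' z) z) (z h : E) (C : ℝ)
    (hb : ∀ ζ, ‖ζ - z‖ ≤ ‖h‖ → ‖f' ζ - f' z‖ ≤ C) :
    ‖f (z + h) + f (z - h) - (f z + f z)‖ ≤ 2 * C * ‖h‖ := by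
  have t1 : ‖f (z + h) - f z - (f' z) h‖ ≤ C * ‖h‖ := by
    refine mvt' f f' hd z h (f' z) C (fun ζ hζ => hb ζ ?_)
    have := norm_sub_le_seg hζ
    simpa using this
  have t2 : ‖f (z + -h) - f z - (f' z) (-h)‖ ≤ C * ‖-h‖ := by
    refine mvt' f f' hd z (-h) (f' z) C (fun ζ hζ => hb ζ ?_)
    have := norm_sub_le_seg hζ
    simpa using this
  rw [← sub_eq_add_neg] at t2
  have key : f (z + h) + f (z - h) - (f z + f z)
      = (f (z + h) - f z - (f' z) h) + (f (z - h) - f z - (f' z) (-h)) := by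
    rw [map_neg]; abel
  rw [key]
  calc ‖(f (z + h) - f z - (f' z) h) + (f (z - h) - f z - (f' z) (-h))‖
      ≤ ‖f (z + h) - f z - (f' z) h‖ + ‖f (z - h) - f z - (f' z) (-h)‖ := norm_add_le _ _
    _ ≤ C * ‖h‖ + C * ‖-h‖ := add_le_add t1 t2
    _ = 2 * C * ‖h‖ := by rw [norm_neg]; ring

/-- difference of second differences, via mean value along the segment from `x` to `y`. -/
lemma gdiff_large (v : E → ℝ) (v' : E → E →L[ℝ] ℝ)
    (hd : ∀ z, HasFDerivAt v (v' z) z) (x y h : E) (K : ℝ)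
    (hb : ∀ ζ ∈ segment ℝ x y, ‖v' (ζ + h) + v' (ζ - h) - (v' ζ + v' ζ)‖ ≤ K) :
    |(2 * v x - v (x + h) - v (x - h)) - (2 * v y - v (y + h) - v (y - h))|
      ≤ K * ‖y - x‖ := by
  have hdη : ∀ z, HasFDerivAt (fun w => v (w + h) + v (w - h) - (v w + v w))
      (v' (z + h) + v' (z - h) - (v' z + v' z)) z := fun z =>
    ((hasFDerivAt_shift v v' hd h z).add (hasFDerivAt_shift_sub v v' hd h z)).sub
      ((hd z).add (hd z))
  have key := mvt (fun w => v (w + h) + v (w - h) - (v w + v w))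
      (fun z => v' (z + h) + v' (z - h) - (v' z + v' z)) hdη x (y - x) K
      (fun ζ hζ => hb ζ (by rwa [show x + (y - x) = y from by abel] at hζ))
  rw [show x + (y - x) = y from by abel] at key
  have e1 : (2 * v x - v (x + h) - v (x - h)) - (2 * v y - v (y + h) - v (y - h))
      = (v (y + h) + v (y - h) - (v y + v y)) - (v (x + h) + v (x - h) - (v x + v x)) := by
    ring
  rw [e1, ← Real.norm_eq_abs]
  exact key

end AnisoAux2

namespace AnisoAux3
open AnisoAux AnisoAux2

variable {E : Type*} [NormedAddCommGroup E] [NormedSpace ℝ E]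

section case0

lemma case0_small (v : E → ℝ) (M t : ℝ)
    (hH : ∀ a b : E, |v a - v b| ≤ M * ‖a - b‖ ^ t) (z h : E) :
    |2 * v z - v (z + h) - v (z - h)| ≤ 2 * (M * ‖h‖ ^ t) := by
  have h1 := hH z (z + h)
  have h2 := hH z (z - h)
  rw [show z - (z + h) = -h from by abel] at h1
  rw [show z - (z - h) = h from by abel] at h2
  rw [norm_neg] at h1
  have e : 2 * v z - v (z + h) - v (z - h) = (v z - v (z + h)) + (v z - v (z - h)) := by ring
  rw [e]
  calc |(v z - v (z + h)) + (v z - v (z - h))| ≤ |v z - v (z + h)| + |v z - v (z - h)| :=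
        abs_add_le _ _
    _ ≤ 2 * (M * ‖h‖ ^ t) := by linarith

lemma case0_large (v : E → ℝ) (M t : ℝ)
    (hH : ∀ a b : E, |v a - v b| ≤ M * ‖a - b‖ ^ t) (x y h : E) :
    |(2 * v x - v (x + h) - v (x - h)) - (2 * v y - v (y + h) - v (y - h))|
      ≤ 4 * (M * ‖x - y‖ ^ t) := by
  have h1 := hH x y
  have h2 := hH (x + h) (y + h)
  have h3 := hH (x - h) (y - h)
  rw [show x + h - (y + h) = x - y from by abel] at h2
  rw [show x - h - (y - h) = x - y from by abel] at h3
  have e : (2 * v x - v (x + h) - v (x - h)) - (2 * v y - v (y + h) - v (y - h))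
      = 2 * (v x - v y) - (v (x + h) - v (y + h)) - (v (x - h) - v (y - h)) := by ring
  rw [e]
  calc |2 * (v x - v y) - (v (x + h) - v (y + h)) - (v (x - h) - v (y - h))|
      ≤ |2 * (v x - v y) - (v (x + h) - v (y + h))| + |v (x - h) - v (y - h)| := abs_sub _ _
    _ ≤ |2 * (v x - v y)| + |v (x + h) - v (y + h)| + |v (x - h) - v (y - h)| := by
        have := abs_sub (2 * (v x - v y)) (v (x + h) - v (y + h))
        linarith
    _ ≤ 4 * (M * ‖x - y‖ ^ t) := by
        rw [abs_mul] at *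
        have : |(2:ℝ)| = 2 := by norm_num
        nlinarith [abs_nonneg (v x - v y)]

end case0

section case1

variable (v : E → ℝ) (v' : E → E →L[ℝ] ℝ) (M α : ℝ)

lemma case1_small (hd : ∀ z, HasFDerivAt v (v' z) z)
    (hH : ∀ a b : E, ‖v' a - v' b‖ ≤ M * ‖a - b‖ ^ α) (hM : 0 ≤ M) (hα : 0 ≤ α)
    (z h : E) :
    |2 * v z - v (z + h) - v (z - h)| ≤ 2 * (M * ‖h‖ ^ α) * ‖h‖ := by
  have key := secondDiff_norm_le v v' hd z h (M * ‖h‖ ^ α) (fun ζ hζ => ?_)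
  · rw [show 2 * v z - v (z + h) - v (z - h) = -(v (z + h) + v (z - h) - (v z + v z)) from
      by ring, abs_neg, ← Real.norm_eq_abs]
    exact key
  · exact (hH ζ z).trans (mul_le_mul_of_nonneg_left
      (Real.rpow_le_rpow (norm_nonneg _) hζ hα) hM)

lemma case1_large (hd : ∀ z, HasFDerivAt v (v' z) z)
    (hH : ∀ a b : E, ‖v' a - v' b‖ ≤ M * ‖a - b‖ ^ α) (x y h : E) :
    |(2 * v x - v (x + h) - v (x - h)) - (2 * v y - v (y + h) - v (y - h))|
      ≤ (2 * (M * ‖h‖ ^ α)) * ‖y - x‖ := by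
  refine gdiff_large v v' hd x y h _ (fun ζ _ => ?_)
  have h1 := hH (ζ + h) ζ
  have h2 := hH (ζ - h) ζ
  rw [show ζ + h - ζ = h from by abel] at h1
  rw [show ζ - h - ζ = -h from by abel, norm_neg] at h2
  calc ‖v' (ζ + h) + v' (ζ - h) - (v' ζ + v' ζ)‖
      = ‖(v' (ζ + h) - v' ζ) + (v' (ζ - h) - v' ζ)‖ := by congr 1; abel
    _ ≤ ‖v' (ζ + h) - v' ζ‖ + ‖v' (ζ - h) - v' ζ‖ := norm_add_le _ _
    _ ≤ 2 * (M * ‖h‖ ^ α) := by linarith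

end case1

section case2

variable (v : E → ℝ) (v' : E → E →L[ℝ] ℝ) (v'' : E → E →L[ℝ] (E →L[ℝ] ℝ)) (M γ : ℝ)

lemma case2_large (hd1 : ∀ z, HasFDerivAt v (v' z) z)
    (hd2 : ∀ z, HasFDerivAt v' (v'' z) z)
    (hH : ∀ a b : E, ‖v'' a - v'' b‖ ≤ M * ‖a - b‖ ^ γ) (hM : 0 ≤ M) (hγ : 0 ≤ γ)
    (x y h : E) :
    |(2 * v x - v (x + h) - v (x - h)) - (2 * v y - v (y + h) - v (y - h))|
      ≤ (2 * (M * ‖h‖ ^ γ) * ‖h‖) * ‖y - x‖ := by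
  refine gdiff_large v v' hd1 x y h _ (fun ζ _ => ?_)
  exact secondDiff_norm_le v' v'' hd2 ζ h (M * ‖h‖ ^ γ) (fun ξ hξ =>
    (hH ξ ζ).trans (mul_le_mul_of_nonneg_left
      (Real.rpow_le_rpow (norm_nonneg _) hξ hγ) hM))

lemma case2_psi' (hd2 : ∀ z, HasFDerivAt v' (v'' z) z)
    (hH : ∀ a b : E, ‖v'' a - v'' b‖ ≤ M * ‖a - b‖ ^ γ) (hM : 0 ≤ M) (hγ : 0 ≤ γ)
    (x e h ζ : E) (hζ : ‖ζ - x‖ ≤ ‖h‖) :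
    ‖(v' ζ - v' (ζ + e)) - (v' x - v' (x + e))‖
      ≤ 2 * ((M * ‖h‖ ^ γ) * ‖h‖) + (M * ‖e‖ ^ γ) * ‖h‖ := by
  have hA : ‖v' ζ - v' x - (v'' x) (ζ - x)‖ ≤ (M * ‖h‖ ^ γ) * ‖ζ - x‖ := by
    have := mvt' v' v'' hd2 x (ζ - x) (v'' x) (M * ‖h‖ ^ γ) (fun ξ hξ => ?_)
    · rwa [show x + (ζ - x) = ζ from by abel] at this
    · refine (hH ξ x).trans (mul_le_mul_of_nonneg_left
        (Real.rpow_le_rpow (norm_nonneg _) ?_ hγ) hM)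
      have := norm_sub_le_seg hξ
      rw [show x + (ζ - x) - x = ζ - x from by abel] at this
      exact this.trans hζ
  have hB : ‖v' (ζ + e) - v' (x + e) - (v'' (x + e)) (ζ - x)‖ ≤ (M * ‖h‖ ^ γ) * ‖ζ - x‖ := by
    have := mvt' v' v'' hd2 (x + e) (ζ - x) (v'' (x + e)) (M * ‖h‖ ^ γ) (fun ξ hξ => ?_)
    · rwa [show x + e + (ζ - x) = ζ + e from by abel] at this
    · refine (hH ξ (x + e)).trans (mul_le_mul_of_nonneg_left
        (Real.rpow_le_rpow (norm_nonneg _) ?_ hγ) hM)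
      have := norm_sub_le_seg hξ
      rw [show x + e + (ζ - x) - (x + e) = ζ - x from by abel] at this
      exact this.trans hζ
  have hC : ‖(v'' x - v'' (x + e)) (ζ - x)‖ ≤ (M * ‖e‖ ^ γ) * ‖h‖ := by
    calc ‖(v'' x - v'' (x + e)) (ζ - x)‖ ≤ ‖v'' x - v'' (x + e)‖ * ‖ζ - x‖ :=
          ContinuousLinearMap.le_opNorm _ _
      _ ≤ (M * ‖e‖ ^ γ) * ‖h‖ := by
          have h1 := hH x (x + e)
          rw [show x - (x + e) = -e from by abel, norm_neg] at h1
          have h0 : (0:ℝ) ≤ M * ‖e‖ ^ γ := by positivity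
          exact mul_le_mul h1 hζ (norm_nonneg _) h0
  have key : (v' ζ - v' (ζ + e)) - (v' x - v' (x + e))
      = (v' ζ - v' x - (v'' x) (ζ - x)) - (v' (ζ + e) - v' (x + e) - (v'' (x + e)) (ζ - x))
        + (v'' x - v'' (x + e)) (ζ - x) := by
    rw [ContinuousLinearMap.sub_apply]; abel
  rw [key]
  have hAB := (norm_sub_le _ _).trans (add_le_add hA hB)
  have hζh : (M * ‖h‖ ^ γ) * ‖ζ - x‖ ≤ (M * ‖h‖ ^ γ) * ‖h‖ := by
    have h0 : (0:ℝ) ≤ M * ‖h‖ ^ γ := by positivity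
    exact mul_le_mul_of_nonneg_left hζ h0
  calc ‖_ + (v'' x - v'' (x + e)) (ζ - x)‖
      ≤ ‖(v' ζ - v' x - (v'' x) (ζ - x)) - (v' (ζ + e) - v' (x + e) - (v'' (x + e)) (ζ - x))‖
        + ‖(v'' x - v'' (x + e)) (ζ - x)‖ := norm_add_le _ _
    _ ≤ 2 * ((M * ‖h‖ ^ γ) * ‖h‖) + (M * ‖e‖ ^ γ) * ‖h‖ := by linarith

lemma case2_small (hd1 : ∀ z, HasFDerivAt v (v' z) z)
    (hd2 : ∀ z, HasFDerivAt v' (v'' z) z)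
    (hH : ∀ a b : E, ‖v'' a - v'' b‖ ≤ M * ‖a - b‖ ^ γ) (hM : 0 ≤ M) (hγ : 0 ≤ γ)
    (x e h : E) :
    |(2 * v x - v (x + h) - v (x - h))
      - (2 * v (x + e) - v ((x + e) + h) - v ((x + e) - h))|
      ≤ 2 * (2 * ((M * ‖h‖ ^ γ) * ‖h‖) + (M * ‖e‖ ^ γ) * ‖h‖) * ‖h‖ := by
  set ψ : E → ℝ := fun z => v z - v (z + e) with hψ
  have hdψ : ∀ z, HasFDerivAt ψ (v' z - v' (z + e)) z := fun z =>
    (hd1 z).sub (hasFDerivAt_shift v v' hd1 e z)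
  have key := secondDiff_norm_le ψ (fun z => v' z - v' (z + e)) hdψ x h
    (2 * ((M * ‖h‖ ^ γ) * ‖h‖) + (M * ‖e‖ ^ γ) * ‖h‖)
    (fun ζ hζ => case2_psi' v' v'' M γ hd2 hH hM hγ x e h ζ hζ)
  have e1 : (2 * v x - v (x + h) - v (x - h))
      - (2 * v (x + e) - v ((x + e) + h) - v ((x + e) - h))
      = -(ψ (x + h) + ψ (x - h) - (ψ x + ψ x)) := by
    simp only [hψ]
    rw [show x + h + e = x + e + h from by abel, show x - h + e = x + e - h from by abel]
    ring
  rw [e1, abs_neg, ← Real.norm_eq_abs]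
  exact key

end case2

end AnisoAux3

namespace AnisoInt

lemma intOn_Ioc_rpow {r p : ℝ} (hr : 0 < r) (hp : -1 < p) :
    IntegrableOn (fun ρ : ℝ => ρ ^ p) (Ioc 0 r) :=
  (intervalIntegrable_iff_integrableOn_Ioc_of_le hr.le).mp (intervalIntegral.intervalIntegrable_rpow' hp)

lemma int_Ioc_rpow {r p : ℝ} (hr : 0 < r) (hp : -1 < p) :
    ∫ ρ in Ioc 0 r, ρ ^ p = r ^ (p + 1) / (p + 1) := by
  rw [← intervalIntegral.integral_of_le hr.le, integral_rpow (Or.inl hp),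
    Real.zero_rpow (by linarith : p + 1 ≠ 0)]
  ring

lemma intOn_Ioi_rpow {r p : ℝ} (hr : 0 < r) (hp : p < -1) :
    IntegrableOn (fun ρ : ℝ => ρ ^ p) (Ioi r) :=
  integrableOn_Ioi_rpow_of_lt hp hr

lemma int_Ioi_rpow {r p : ℝ} (hr : 0 < r) (hp : p < -1) :
    ∫ ρ in Ioi r, ρ ^ p = r ^ (p + 1) / (-(p + 1)) := by
  rw [integral_Ioi_rpow_of_lt hp hr, neg_div, ← div_neg]

end AnisoInt

namespace AnisoInt

lemma assemble {r : ℝ} (hr : 0 < r) (c₁ c₂ c₃ p₁ p₂ p₃ : ℝ)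
    (hp₁ : -1 < p₁) (hp₂ : -1 < p₂) (hp₃ : p₃ < -1) :
    IntegrableOn (fun ρ => if ρ ≤ r then c₁ * ρ ^ p₁ + c₂ * ρ ^ p₂ else c₃ * ρ ^ p₃)
      (Ioi (0:ℝ))
    ∧ ∫ ρ in Ioi (0:ℝ), (if ρ ≤ r then c₁ * ρ ^ p₁ + c₂ * ρ ^ p₂ else c₃ * ρ ^ p₃)
        = c₁ * (r ^ (p₁+1)/(p₁+1)) + c₂ * (r ^ (p₂+1)/(p₂+1))
          + c₃ * (r ^ (p₃+1)/(-(p₃+1))) := by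
  have hIoc : IntegrableOn (fun ρ : ℝ => c₁ * ρ ^ p₁ + c₂ * ρ ^ p₂) (Ioc 0 r) :=
    ((intOn_Ioc_rpow hr hp₁).const_mul c₁).add ((intOn_Ioc_rpow hr hp₂).const_mul c₂)
  have hIoi : IntegrableOn (fun ρ : ℝ => c₃ * ρ ^ p₃) (Ioi r) :=
    (intOn_Ioi_rpow hr hp₃).const_mul c₃
  have e1 : EqOn (fun ρ : ℝ => c₁ * ρ ^ p₁ + c₂ * ρ ^ p₂)
      (fun ρ : ℝ => if ρ ≤ r then c₁ * ρ ^ p₁ + c₂ * ρ ^ p₂ else c₃ * ρ ^ p₃) (Ioc 0 r) :=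
    fun ρ hρ => (if_pos hρ.2).symm
  have e2 : EqOn (fun ρ : ℝ => c₃ * ρ ^ p₃)
      (fun ρ : ℝ => if ρ ≤ r then c₁ * ρ ^ p₁ + c₂ * ρ ^ p₂ else c₃ * ρ ^ p₃) (Ioi r) :=
    fun ρ hρ => (if_neg (not_le.mpr hρ)).symm
  have hI1 : IntegrableOn
      (fun ρ : ℝ => if ρ ≤ r then c₁ * ρ ^ p₁ + c₂ * ρ ^ p₂ else c₃ * ρ ^ p₃) (Ioc 0 r) :=
    hIoc.congr_fun e1 measurableSet_Ioc
  have hI2 : IntegrableOn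
      (fun ρ : ℝ => if ρ ≤ r then c₁ * ρ ^ p₁ + c₂ * ρ ^ p₂ else c₃ * ρ ^ p₃) (Ioi r) :=
    hIoi.congr_fun e2 measurableSet_Ioi
  have hsplit : Ioc (0:ℝ) r ∪ Ioi r = Ioi 0 := Ioc_union_Ioi_eq_Ioi hr.le
  constructor
  · rw [← hsplit]; exact hI1.union hI2
  · rw [← hsplit, setIntegral_union (Ioc_disjoint_Ioi le_rfl) measurableSet_Ioi hI1 hI2,
      setIntegral_congr_fun measurableSet_Ioc e1.symm,
      setIntegral_congr_fun measurableSet_Ioi e2.symm,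
      integral_add ((intOn_Ioc_rpow hr hp₁).const_mul c₁) ((intOn_Ioc_rpow hr hp₂).const_mul c₂),
      integral_const_mul, integral_const_mul, integral_const_mul,
      int_Ioc_rpow hr hp₁, int_Ioc_rpow hr hp₂, int_Ioi_rpow hr hp₃]

end AnisoInt

open AnisoAux AnisoAux2 AnisoAux3 AnisoInt

/-- The anisotropic operator
`Lv(x) = ∫_0^∞ dρ ∫_{S^{n-1}} da(ω) (2v(x) - v(x+ρω) - v(x-ρω)) / ρ^{1+2s}`. -/
def anisoOp (n : ℕ) (s : ℝ)
    (a : Measure (Metric.sphere (0 : EuclideanSpace ℝ (Fin n)) 1))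
    (v : EuclideanSpace ℝ (Fin n) → ℝ) (x : EuclideanSpace ℝ (Fin n)) : ℝ :=
  ∫ ρ in Set.Ioi (0 : ℝ),
    (∫ ω : Metric.sphere (0 : EuclideanSpace ℝ (Fin n)) 1,
      (2 * v x - v (x + ρ • (ω : EuclideanSpace ℝ (Fin n)))
        - v (x - ρ • (ω : EuclideanSpace ℝ (Fin n)))) ∂a) / ρ ^ (1 + 2 * s)

/-- The operator `L` "loses `2s` derivatives": if `v ∈ C^{β+2s}(ℝⁿ)`, then
`Lv ∈ C^β(B₁)` with `[Lv]_{C^β(B₁)} ≤ C [v]_{C^{β+2s}(ℝⁿ)}`, for any measure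
`a` on `S^{n-1}` of total mass at most `Λ`, `β ∈ (0,1)`, `β + 2s ∉ ℤ`. -/
theorem anisoOp_loses_2s_derivatives
    (n : ℕ) (s β Λ : ℝ) (hs : s ∈ Set.Ioo (0 : ℝ) 1)
    (hβ : β ∈ Set.Ioo (0 : ℝ) 1) (hΛ : 0 < Λ)
    (hni : ∀ k : ℤ, β + 2 * s ≠ (k : ℝ)) :
    ∃ C > 0, ∀ (a : Measure (Metric.sphere (0 : EuclideanSpace ℝ (Fin n)) 1))
      (v : EuclideanSpace ℝ (Fin n) → ℝ) (M : ℝ),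
      a Set.univ ≤ ENNReal.ofReal Λ →
      ContDiff ℝ (⌊β + 2 * s⌋₊ : ℕ) v →
      (∀ x y : EuclideanSpace ℝ (Fin n),
        ‖iteratedFDeriv ℝ ⌊β + 2 * s⌋₊ v x - iteratedFDeriv ℝ ⌊β + 2 * s⌋₊ v y‖
          ≤ M * ‖x - y‖ ^ (β + 2 * s - (⌊β + 2 * s⌋₊ : ℝ))) →
      ∀ x ∈ Metric.ball (0 : EuclideanSpace ℝ (Fin n)) 1,
        ∀ y ∈ Metric.ball (0 : EuclideanSpace ℝ (Fin n)) 1,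
        |anisoOp n s a v x - anisoOp n s a v y| ≤ C * M * ‖x - y‖ ^ β := by
  obtain ⟨hs0, hs1⟩ := hs
  obtain ⟨hβ0, hβ1⟩ := hβ
  set t : ℝ := β + 2 * s with ht
  have ht0 : 0 < t := by rw [ht]; linarith
  have hC0 : 0 < Λ * (4/β + 2/s + 2/(1-β) + 2/(2-2*s)) := by
    have h1 : (0:ℝ) < 1 - β := by linarith
    have h2 : (0:ℝ) < 2 - 2*s := by linarith
    have := div_pos (by norm_num : (0:ℝ) < 4) hβ0
    have := div_pos (by norm_num : (0:ℝ) < 2) hs0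
    have := div_pos (by norm_num : (0:ℝ) < 2) h1
    have := div_pos (by norm_num : (0:ℝ) < 2) h2
    exact mul_pos hΛ (by linarith)
  refine ⟨Λ * (4/β + 2/s + 2/(1-β) + 2/(2-2*s)), hC0, ?_⟩
  intro a v M ha hv hH x hx y hy
  by_cases hxy : x = y
  · subst hxy
    simp [sub_self, Real.zero_rpow hβ0.ne']
  have hr : 0 < ‖x - y‖ := by
    rw [norm_pos_iff]; exact sub_ne_zero_of_ne hxy
  set r : ℝ := ‖x - y‖ with hrdef
  have hM : 0 ≤ M := by
    have h1 := (norm_nonneg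
      (iteratedFDeriv ℝ ⌊t⌋₊ v x - iteratedFDeriv ℝ ⌊t⌋₊ v y)).trans (hH x y)
    have h2 : 0 < r ^ (t - (⌊t⌋₊:ℝ)) := Real.rpow_pos_of_pos hr _
    nlinarith
  haveI : IsFiniteMeasure a := ⟨lt_of_le_of_lt ha ENNReal.ofReal_lt_top⟩
  have hΛa : (a Set.univ).toReal ≤ Λ := ENNReal.toReal_le_of_le_ofReal hΛ.le ha
  have hvC : Continuous v := hv.continuous
  set P : EuclideanSpace ℝ (Fin n) → ℝ → ℝ := fun z ρ =>
    ∫ ω : Metric.sphere (0 : EuclideanSpace ℝ (Fin n)) 1,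
      (2 * v z - v (z + ρ • (ω : EuclideanSpace ℝ (Fin n)))
        - v (z - ρ • (ω : EuclideanSpace ℝ (Fin n)))) ∂a with hP
  have hOp : ∀ z, anisoOp n s a v z = ∫ ρ in Ioi (0:ℝ), P z ρ / ρ ^ (1 + 2*s) :=
    fun z => rfl
  have hcont : ∀ z : EuclideanSpace ℝ (Fin n),
      Continuous (fun q : ℝ × Metric.sphere (0 : EuclideanSpace ℝ (Fin n)) 1 =>
        2 * v z - v (z + q.1 • (q.2 : EuclideanSpace ℝ (Fin n)))
          - v (z - q.1 • (q.2 : EuclideanSpace ℝ (Fin n)))) := by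
    intro z
    have hsm : Continuous (fun q : ℝ × Metric.sphere (0 : EuclideanSpace ℝ (Fin n)) 1 =>
        q.1 • (q.2 : EuclideanSpace ℝ (Fin n))) :=
      continuous_fst.smul (continuous_subtype_val.comp continuous_snd)
    exact (continuous_const.sub (hvC.comp (continuous_const.add hsm))).sub
      (hvC.comp (continuous_const.sub hsm)) |>.congr (fun q => rfl)
  have hintA : ∀ (z : EuclideanSpace ℝ (Fin n)) (ρ : ℝ),
      Integrable (fun ω : Metric.sphere (0 : EuclideanSpace ℝ (Fin n)) 1 =>
        2 * v z - v (z + ρ • (ω : EuclideanSpace ℝ (Fin n)))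
          - v (z - ρ • (ω : EuclideanSpace ℝ (Fin n)))) a := by
    intro z ρ
    have hc : Continuous (fun ω : Metric.sphere (0 : EuclideanSpace ℝ (Fin n)) 1 =>
        2 * v z - v (z + ρ • (ω : EuclideanSpace ℝ (Fin n)))
          - v (z - ρ • (ω : EuclideanSpace ℝ (Fin n)))) :=
      (hcont z).comp (Continuous.prodMk_right ρ)
    obtain ⟨Cb, hCb⟩ := isCompact_univ.exists_bound_of_continuousOn hc.continuousOn
    exact (integrable_const Cb).mono' hc.aestronglyMeasurable
      (ae_of_all _ fun ω => hCb ω (mem_univ ω))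
  have hPm : ∀ z : EuclideanSpace ℝ (Fin n), Measurable (fun ρ => P z ρ) := by
    intro z
    exact ((hcont z).stronglyMeasurable.integral_prod_right').measurable
  have hPdiff : ∀ ρ : ℝ, ∀ K : ℝ, 0 ≤ K →
      (∀ ω : Metric.sphere (0 : EuclideanSpace ℝ (Fin n)) 1,
        |(2 * v x - v (x + ρ • (ω : EuclideanSpace ℝ (Fin n)))
            - v (x - ρ • (ω : EuclideanSpace ℝ (Fin n))))
          - (2 * v y - v (y + ρ • (ω : EuclideanSpace ℝ (Fin n)))
            - v (y - ρ • (ω : EuclideanSpace ℝ (Fin n))))| ≤ K) →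
      |P x ρ - P y ρ| ≤ Λ * K := by
    intro ρ K hK hb
    rw [hP]
    simp only
    rw [← integral_sub (hintA x ρ) (hintA y ρ), ← Real.norm_eq_abs]
    have h1 := norm_integral_le_of_norm_le_const (μ := a) (C := K)
      (ae_of_all _ (fun ω => by rw [Real.norm_eq_abs]; exact hb ω))
    refine h1.trans ?_
    rw [mul_comm]
    exact mul_le_mul_of_nonneg_right hΛa hK
  have hne1 : t ≠ 1 := by have := hni 1; rw [ht]; simpa using this
  have hne2 : t ≠ 2 := by have := hni 2; rw [ht]; simpa using this
  have main : ∃ K : ℝ → ℝ,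
      (∀ ρ ∈ Ioi (0:ℝ), |P x ρ - P y ρ| / ρ ^ (1 + 2*s) ≤ K ρ) ∧
      IntegrableOn K (Ioi 0) ∧
      (∫ ρ in Ioi (0:ℝ), K ρ) ≤ Λ * (4/β + 2/s + 2/(1-β) + 2/(2-2*s)) * M * r ^ β := by
    have hω : ∀ (ρ : ℝ), 0 < ρ →
        ∀ ω : Metric.sphere (0 : EuclideanSpace ℝ (Fin n)) 1,
          ‖ρ • (ω : EuclideanSpace ℝ (Fin n))‖ = ρ := by
      intro ρ hρ ω
      rw [norm_smul, Real.norm_eq_abs, abs_of_pos hρ,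
        mem_sphere_zero_iff_norm.mp ω.2, mul_one]
    have h1βpos : (0:ℝ) < 1 - β := by linarith
    have h2spos : (0:ℝ) < 2 - 2*s := by linarith
    have hrβ : (0:ℝ) < r ^ β := Real.rpow_pos_of_pos hr β
    have slack0 : (0:ℝ) ≤ Λ * (2/(1-β) + 2/(2-2*s)) * M * r^β := by
      have q1 : (0:ℝ) ≤ 2/(1-β) := (div_pos two_pos h1βpos).le
      have q2 : (0:ℝ) ≤ 2/(2-2*s) := (div_pos two_pos h2spos).le
      exact mul_nonneg (mul_nonneg (mul_nonneg hΛ.le (by linarith)) hM) hrβ.le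
    have slack1 : (0:ℝ) ≤ Λ * (2/s + 2/(2-2*s)) * M * r^β := by
      have q1 : (0:ℝ) ≤ 2/s := (div_pos two_pos hs0).le
      have q2 : (0:ℝ) ≤ 2/(2-2*s) := (div_pos two_pos h2spos).le
      exact mul_nonneg (mul_nonneg (mul_nonneg hΛ.le (by linarith)) hM) hrβ.le
    have slack2 : (0:ℝ) ≤ Λ * (2/s) * M * r^β := by
      have q1 : (0:ℝ) ≤ 2/s := (div_pos two_pos hs0).le
      exact mul_nonneg (mul_nonneg (mul_nonneg hΛ.le q1) hM) hrβ.le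
    rcases lt_or_gt_of_ne hne1 with h1 | h1
    · -- t < 1, zeroth order case
      have hk : ⌊t⌋₊ = 0 := Nat.floor_eq_zero.mpr h1
      rw [hk] at hH
      have hte : t - ((0:ℕ):ℝ) = t := by push_cast; ring
      simp only [hte] at hH
      have hH0 : ∀ p q : EuclideanSpace ℝ (Fin n), |v p - v q| ≤ M * ‖p - q‖ ^ t := by
        intro p q
        calc |v p - v q|
            = ‖(iteratedFDeriv ℝ 0 v p - iteratedFDeriv ℝ 0 v q)
                (fun _ => (0 : EuclideanSpace ℝ (Fin n)))‖ := by
              simp [ContinuousMultilinearMap.sub_apply]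
          _ ≤ ‖iteratedFDeriv ℝ 0 v p - iteratedFDeriv ℝ 0 v q‖ := by
              simpa using ContinuousMultilinearMap.le_opNorm
                (iteratedFDeriv ℝ 0 v p - iteratedFDeriv ℝ 0 v q)
                (fun _ => (0 : EuclideanSpace ℝ (Fin n)))
          _ ≤ M * ‖p - q‖ ^ t := hH p q
      have hp₁ : -1 < t - (1+2*s) := by rw [ht]; linarith
      have hp₂ : -1 < (0:ℝ) := by norm_num
      have hp₃ : -(1+2*s) < -1 := by linarith
      obtain ⟨hint, hval⟩ := assemble hr (Λ*(4*M)) 0 (Λ*(4*M*r^t)) _ _ _ hp₁ hp₂ hp₃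
      refine ⟨_, ?_, hint, ?_⟩
      · intro ρ hρ
        simp only [mem_Ioi] at hρ
        by_cases hρr : ρ ≤ r
        · simp only [if_pos hρr]
          have hb : ∀ ω : Metric.sphere (0 : EuclideanSpace ℝ (Fin n)) 1,
              |(2 * v x - v (x + ρ • (ω : EuclideanSpace ℝ (Fin n)))
                - v (x - ρ • (ω : EuclideanSpace ℝ (Fin n))))
              - (2 * v y - v (y + ρ • (ω : EuclideanSpace ℝ (Fin n)))
                - v (y - ρ • (ω : EuclideanSpace ℝ (Fin n))))| ≤ 4*(M*ρ^t) := by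
            intro ω
            have b1 := case0_small v M t hH0 x (ρ • (ω : EuclideanSpace ℝ (Fin n)))
            have b2 := case0_small v M t hH0 y (ρ • (ω : EuclideanSpace ℝ (Fin n)))
            rw [hω ρ hρ ω] at b1 b2
            have := abs_sub (2 * v x - v (x + ρ • (ω : EuclideanSpace ℝ (Fin n)))
                - v (x - ρ • (ω : EuclideanSpace ℝ (Fin n))))
              (2 * v y - v (y + ρ • (ω : EuclideanSpace ℝ (Fin n)))
                - v (y - ρ • (ω : EuclideanSpace ℝ (Fin n))))
            linarith
          have hKnn : (0:ℝ) ≤ 4*(M*ρ^t) :=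
            mul_nonneg (by norm_num) (mul_nonneg hM (Real.rpow_nonneg hρ.le _))
          have hPd := hPdiff ρ _ hKnn hb
          calc |P x ρ - P y ρ| / ρ ^ (1+2*s)
              ≤ (Λ * (4*(M*ρ^t))) / ρ ^ (1+2*s) :=
                (div_le_div_iff_of_pos_right (Real.rpow_pos_of_pos hρ _)).mpr hPd
            _ = Λ*(4*M) * ρ ^ (t-(1+2*s)) + 0 * ρ ^ (0:ℝ) := by
                rw [Real.rpow_sub hρ]; ring
        · simp only [if_neg hρr]
          have hb : ∀ ω : Metric.sphere (0 : EuclideanSpace ℝ (Fin n)) 1,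
              |(2 * v x - v (x + ρ • (ω : EuclideanSpace ℝ (Fin n)))
                - v (x - ρ • (ω : EuclideanSpace ℝ (Fin n))))
              - (2 * v y - v (y + ρ • (ω : EuclideanSpace ℝ (Fin n)))
                - v (y - ρ • (ω : EuclideanSpace ℝ (Fin n))))| ≤ 4*(M*r^t) := fun ω =>
            case0_large v M t hH0 x y (ρ • (ω : EuclideanSpace ℝ (Fin n)))
          have hKnn : (0:ℝ) ≤ 4*(M*r^t) :=
            mul_nonneg (by norm_num) (mul_nonneg hM (Real.rpow_nonneg hr.le _))
          have hPd := hPdiff ρ _ hKnn hb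
          calc |P x ρ - P y ρ| / ρ ^ (1+2*s)
              ≤ (Λ * (4*(M*r^t))) / ρ ^ (1+2*s) :=
                (div_le_div_iff_of_pos_right (Real.rpow_pos_of_pos hρ _)).mpr hPd
            _ = Λ*(4*M*r^t) * ρ ^ (-(1+2*s)) := by
                rw [Real.rpow_neg hρ.le]; ring
      · rw [hval]
        have e₁ : t - (1+2*s) + 1 = β := by rw [ht]; ring
        rw [e₁]
        have e₅ : r^t * r^((-(1+2*s))+1) = r^β := by
          rw [← Real.rpow_add hr]; congr 1; rw [ht]; ring
        have key : Λ*(4*M) * (r^β/β) + 0 * (r^((0:ℝ)+1)/((0:ℝ)+1))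
            + Λ*(4*M*r^t) * (r^((-(1+2*s))+1)/(-((-(1+2*s))+1)))
            = Λ * (4/β + 2/s) * M * r^β := by
          linear_combination (Λ*(4*M)/(-((-(1+2*s))+1))) * e₅
        rw [key]
        have expand : Λ * (4/β + 2/s + 2/(1-β) + 2/(2-2*s)) * M * r^β
            = Λ*(4/β + 2/s)*M*r^β + Λ*(2/(1-β) + 2/(2-2*s))*M*r^β := by ring
        rw [expand]
        linarith
    · rcases lt_or_gt_of_ne hne2 with h2 | h2
      · -- 1 < t < 2, first order case
        have hk : ⌊t⌋₊ = 1 := by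
          rw [Nat.floor_eq_iff ht0.le]
          constructor <;> push_cast <;> linarith
        rw [hk] at hH hv
        have hte : t - ((1:ℕ):ℝ) = t - 1 := by push_cast; ring
        simp only [hte] at hH
        have hα0 : (0:ℝ) ≤ t - 1 := by linarith
        have hd : ∀ z, HasFDerivAt v (fderiv ℝ v z) z := fun z =>
          (hv.differentiable (by simp)).differentiableAt.hasFDerivAt
        have hH1 : ∀ p q : EuclideanSpace ℝ (Fin n),
            ‖fderiv ℝ v p - fderiv ℝ v q‖ ≤ M * ‖p - q‖ ^ (t-1) := by
          intro p q
          refine ContinuousLinearMap.opNorm_le_bound _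
            (mul_nonneg hM (Real.rpow_nonneg (norm_nonneg _) _)) (fun u => ?_)
          have e : (fderiv ℝ v p - fderiv ℝ v q) u
              = (iteratedFDeriv ℝ 1 v p - iteratedFDeriv ℝ 1 v q) (fun _ => u) := by
            simp [ContinuousLinearMap.sub_apply, ContinuousMultilinearMap.sub_apply,
              iteratedFDeriv_one_apply]
          rw [e]
          calc ‖(iteratedFDeriv ℝ 1 v p - iteratedFDeriv ℝ 1 v q) (fun _ => u)‖
              ≤ ‖iteratedFDeriv ℝ 1 v p - iteratedFDeriv ℝ 1 v q‖ * ‖u‖ := by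
                simpa using ContinuousMultilinearMap.le_opNorm
                  (iteratedFDeriv ℝ 1 v p - iteratedFDeriv ℝ 1 v q) (fun _ => u)
            _ ≤ (M * ‖p - q‖ ^ (t-1)) * ‖u‖ :=
                mul_le_mul_of_nonneg_right (hH p q) (norm_nonneg u)
        have hp₁ : -1 < t - (1+2*s) := by rw [ht]; linarith
        have hp₂ : -1 < (0:ℝ) := by norm_num
        have hp₃ : (t-1) - (1+2*s) < -1 := by rw [ht]; linarith
        obtain ⟨hint, hval⟩ := assemble hr (Λ*(4*M)) 0 (Λ*(2*M*r)) _ _ _ hp₁ hp₂ hp₃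
        refine ⟨_, ?_, hint, ?_⟩
        · intro ρ hρ
          simp only [mem_Ioi] at hρ
          by_cases hρr : ρ ≤ r
          · simp only [if_pos hρr]
            have hb : ∀ ω : Metric.sphere (0 : EuclideanSpace ℝ (Fin n)) 1,
                |(2 * v x - v (x + ρ • (ω : EuclideanSpace ℝ (Fin n)))
                  - v (x - ρ • (ω : EuclideanSpace ℝ (Fin n))))
                - (2 * v y - v (y + ρ • (ω : EuclideanSpace ℝ (Fin n)))
                  - v (y - ρ • (ω : EuclideanSpace ℝ (Fin n))))|
                ≤ 2 * (2 * (M * ρ ^ (t-1)) * ρ) := by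
              intro ω
              have b1 := case1_small v (fderiv ℝ v) M (t-1) hd hH1 hM hα0 x
                (ρ • (ω : EuclideanSpace ℝ (Fin n)))
              have b2 := case1_small v (fderiv ℝ v) M (t-1) hd hH1 hM hα0 y
                (ρ • (ω : EuclideanSpace ℝ (Fin n)))
              rw [hω ρ hρ ω] at b1 b2
              have := abs_sub (2 * v x - v (x + ρ • (ω : EuclideanSpace ℝ (Fin n)))
                  - v (x - ρ • (ω : EuclideanSpace ℝ (Fin n))))
                (2 * v y - v (y + ρ • (ω : EuclideanSpace ℝ (Fin n)))
                  - v (y - ρ • (ω : EuclideanSpace ℝ (Fin n))))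
              linarith
            have hKnn : (0:ℝ) ≤ 2 * (2 * (M * ρ ^ (t-1)) * ρ) := by
              have : (0:ℝ) ≤ M * ρ ^ (t-1) :=
                mul_nonneg hM (Real.rpow_nonneg hρ.le _)
              nlinarith
            have hPd := hPdiff ρ _ hKnn hb
            have eρ : ρ ^ (t-1) * ρ = ρ ^ t := by
              rw [← Real.rpow_add_one hρ.ne' (t-1)]; congr 1; ring
            calc |P x ρ - P y ρ| / ρ ^ (1+2*s)
                ≤ (Λ * (2 * (2 * (M * ρ ^ (t-1)) * ρ))) / ρ ^ (1+2*s) :=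
                  (div_le_div_iff_of_pos_right (Real.rpow_pos_of_pos hρ _)).mpr hPd
              _ = Λ*(4*M) * ρ ^ (t-(1+2*s)) + 0 * ρ ^ (0:ℝ) := by
                  rw [div_eq_iff (Real.rpow_pos_of_pos hρ (1+2*s)).ne']
                  have eA : ρ ^ (t-(1+2*s)) * ρ^(1+2*s) = ρ^t := by
                    rw [← Real.rpow_add hρ]; congr 1; ring
                  linear_combination (4*Λ*M)*eρ - (4*Λ*M)*eA
          · simp only [if_neg hρr]
            have hb : ∀ ω : Metric.sphere (0 : EuclideanSpace ℝ (Fin n)) 1,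
                |(2 * v x - v (x + ρ • (ω : EuclideanSpace ℝ (Fin n)))
                  - v (x - ρ • (ω : EuclideanSpace ℝ (Fin n))))
                - (2 * v y - v (y + ρ • (ω : EuclideanSpace ℝ (Fin n)))
                  - v (y - ρ • (ω : EuclideanSpace ℝ (Fin n))))|
                ≤ 2 * (M * ρ ^ (t-1)) * r := by
              intro ω
              have b := case1_large v (fderiv ℝ v) M (t-1) hd hH1 x y
                (ρ • (ω : EuclideanSpace ℝ (Fin n)))
              rw [hω ρ hρ ω, norm_sub_rev, ← hrdef] at b
              exact b
            have hKnn : (0:ℝ) ≤ 2 * (M * ρ ^ (t-1)) * r := by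
              have : (0:ℝ) ≤ M * ρ ^ (t-1) :=
                mul_nonneg hM (Real.rpow_nonneg hρ.le _)
              nlinarith
            have hPd := hPdiff ρ _ hKnn hb
            calc |P x ρ - P y ρ| / ρ ^ (1+2*s)
                ≤ (Λ * (2 * (M * ρ ^ (t-1)) * r)) / ρ ^ (1+2*s) :=
                  (div_le_div_iff_of_pos_right (Real.rpow_pos_of_pos hρ _)).mpr hPd
              _ = Λ*(2*M*r) * ρ ^ ((t-1)-(1+2*s)) := by
                  rw [div_eq_iff (Real.rpow_pos_of_pos hρ (1+2*s)).ne']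
                  have eB : ρ ^ ((t-1)-(1+2*s)) * ρ^(1+2*s) = ρ^(t-1) := by
                    rw [← Real.rpow_add hρ]; congr 1; ring
                  linear_combination (-(2*Λ*M*r))*eB
        · rw [hval]
          have e₁ : t - (1+2*s) + 1 = β := by rw [ht]; ring
          have e₃v : (t-1) - (1+2*s) + 1 = β - 1 := by rw [ht]; ring
          rw [e₁, e₃v]
          have eG : r * r^(β-1) = r^β := by
            calc r * r^(β-1) = r^(1:ℝ) * r^(β-1) := by rw [Real.rpow_one]
              _ = r^β := by rw [← Real.rpow_add hr]; congr 1; ring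
          have key : Λ*(4*M) * (r^β/β) + 0 * (r^((0:ℝ)+1)/((0:ℝ)+1))
              + Λ*(2*M*r) * (r^(β-1)/(-(β-1)))
              = Λ * (4/β + 2/(1-β)) * M * r^β := by
            linear_combination (Λ*(2*M)/(-(β-1))) * eG
          rw [key]
          have expand : Λ * (4/β + 2/s + 2/(1-β) + 2/(2-2*s)) * M * r^β
              = Λ*(4/β + 2/(1-β))*M*r^β + Λ*(2/s + 2/(2-2*s))*M*r^β := by ring
          rw [expand]
          linarith
      · -- 2 < t < 3, second order case
        have ht3 : t < 3 := by rw [ht]; linarith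
        have hk : ⌊t⌋₊ = 2 := by
          rw [Nat.floor_eq_iff ht0.le]
          constructor <;> push_cast <;> linarith
        rw [hk] at hH hv
        have hte : t - ((2:ℕ):ℝ) = t - 2 := by push_cast; ring
        simp only [hte] at hH
        have hγ0 : (0:ℝ) ≤ t - 2 := by linarith
        have hd1 : ∀ z, HasFDerivAt v (fderiv ℝ v z) z := fun z =>
          (hv.differentiable (by simp)).differentiableAt.hasFDerivAt
        have hv1 : ContDiff ℝ 1 (fderiv ℝ v) :=
          hv.fderiv_right (m := 1) (by norm_cast)
        have hd2 : ∀ z, HasFDerivAt (fderiv ℝ v) (fderiv ℝ (fderiv ℝ v) z) z := fun z =>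
          (hv1.differentiable one_ne_zero).differentiableAt.hasFDerivAt
        have hH2 : ∀ p q : EuclideanSpace ℝ (Fin n),
            ‖fderiv ℝ (fderiv ℝ v) p - fderiv ℝ (fderiv ℝ v) q‖
              ≤ M * ‖p - q‖ ^ (t-2) := by
          intro p q
          refine ContinuousLinearMap.opNorm_le_bound _
            (mul_nonneg hM (Real.rpow_nonneg (norm_nonneg _) _)) (fun u => ?_)
          refine ContinuousLinearMap.opNorm_le_bound _
            (mul_nonneg (mul_nonneg hM (Real.rpow_nonneg (norm_nonneg _) _))
              (norm_nonneg u)) (fun w => ?_)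
          have e : ((fderiv ℝ (fderiv ℝ v) p - fderiv ℝ (fderiv ℝ v) q) u) w
              = (iteratedFDeriv ℝ 2 v p - iteratedFDeriv ℝ 2 v q) ![u, w] := by
            simp [ContinuousLinearMap.sub_apply, ContinuousMultilinearMap.sub_apply,
              iteratedFDeriv_two_apply]
          rw [e]
          calc ‖(iteratedFDeriv ℝ 2 v p - iteratedFDeriv ℝ 2 v q) ![u, w]‖
              ≤ ‖iteratedFDeriv ℝ 2 v p - iteratedFDeriv ℝ 2 v q‖ * (‖u‖ * ‖w‖) := by
                simpa [Fin.prod_univ_two] using ContinuousMultilinearMap.le_opNorm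
                  (iteratedFDeriv ℝ 2 v p - iteratedFDeriv ℝ 2 v q) ![u, w]
            _ ≤ (M * ‖p - q‖ ^ (t-2)) * (‖u‖ * ‖w‖) :=
                mul_le_mul_of_nonneg_right (hH p q)
                  (mul_nonneg (norm_nonneg u) (norm_nonneg w))
            _ = M * ‖p - q‖ ^ (t-2) * ‖u‖ * ‖w‖ := by ring
        have hp₁ : -1 < t - (1+2*s) := by rw [ht]; linarith
        have hp₂ : -1 < 2 - (1+2*s) := by linarith
        have hp₃ : (t-1) - (1+2*s) < -1 := by rw [ht]; linarith
        obtain ⟨hint, hval⟩ := assemble hr (Λ*(4*M)) (Λ*(2*M*r^(t-2))) (Λ*(2*M*r))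
          _ _ _ hp₁ hp₂ hp₃
        refine ⟨_, ?_, hint, ?_⟩
        · intro ρ hρ
          simp only [mem_Ioi] at hρ
          by_cases hρr : ρ ≤ r
          · simp only [if_pos hρr]
            have hb : ∀ ω : Metric.sphere (0 : EuclideanSpace ℝ (Fin n)) 1,
                |(2 * v x - v (x + ρ • (ω : EuclideanSpace ℝ (Fin n)))
                  - v (x - ρ • (ω : EuclideanSpace ℝ (Fin n))))
                - (2 * v y - v (y + ρ • (ω : EuclideanSpace ℝ (Fin n)))
                  - v (y - ρ • (ω : EuclideanSpace ℝ (Fin n))))|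
                ≤ 2 * (2 * ((M * ρ ^ (t-2)) * ρ) + (M * r ^ (t-2)) * ρ) * ρ := by
              intro ω
              have b := case2_small v (fderiv ℝ v) (fderiv ℝ (fderiv ℝ v)) M (t-2)
                hd1 hd2 hH2 hM hγ0 x (y - x) (ρ • (ω : EuclideanSpace ℝ (Fin n)))
              rw [show x + (y - x) = y from by abel] at b
              rw [hω ρ hρ ω, norm_sub_rev, ← hrdef] at b
              exact b
            have hKnn : (0:ℝ) ≤ 2 * (2 * ((M * ρ ^ (t-2)) * ρ) + (M * r ^ (t-2)) * ρ) * ρ := by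
              have h1 : (0:ℝ) ≤ M * ρ ^ (t-2) :=
                mul_nonneg hM (Real.rpow_nonneg hρ.le _)
              have h2 : (0:ℝ) ≤ M * r ^ (t-2) :=
                mul_nonneg hM (Real.rpow_nonneg hr.le _)
              have h3 : (0:ℝ) ≤ 2 * (2 * ((M * ρ ^ (t-2)) * ρ) + (M * r ^ (t-2)) * ρ) := by
                nlinarith
              exact mul_nonneg h3 hρ.le
            have hPd := hPdiff ρ _ hKnn hb
            calc |P x ρ - P y ρ| / ρ ^ (1+2*s)
                ≤ (Λ * (2 * (2 * ((M * ρ ^ (t-2)) * ρ) + (M * r ^ (t-2)) * ρ) * ρ))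
                    / ρ ^ (1+2*s) :=
                  (div_le_div_iff_of_pos_right (Real.rpow_pos_of_pos hρ _)).mpr hPd
              _ = Λ*(4*M) * ρ ^ (t-(1+2*s)) + Λ*(2*M*r^(t-2)) * ρ ^ (2-(1+2*s)) := by
                  rw [div_eq_iff (Real.rpow_pos_of_pos hρ (1+2*s)).ne']
                  have eA : ρ ^ (t-(1+2*s)) * ρ^(1+2*s) = ρ^t := by
                    rw [← Real.rpow_add hρ]; congr 1; ring
                  have eB : ρ ^ (2-(1+2*s)) * ρ^(1+2*s) = ρ * ρ := by
                    rw [← Real.rpow_add hρ, show 2-(1+2*s)+(1+2*s) = (2:ℝ) from by ring,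
                      show (2:ℝ) = ((2:ℕ):ℝ) from by norm_num, Real.rpow_natCast]
                    ring
                  have eC : ρ ^ (t-2) * ρ * ρ = ρ^t := by
                    rw [← Real.rpow_add_one hρ.ne' (t-2), ← Real.rpow_add_one hρ.ne']
                    congr 1; ring
                  linear_combination (4*Λ*M)*eC - (4*Λ*M)*eA - (2*Λ*M*r^(t-2))*eB
          · simp only [if_neg hρr]
            have hb : ∀ ω : Metric.sphere (0 : EuclideanSpace ℝ (Fin n)) 1,
                |(2 * v x - v (x + ρ • (ω : EuclideanSpace ℝ (Fin n)))
                  - v (x - ρ • (ω : EuclideanSpace ℝ (Fin n))))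
                - (2 * v y - v (y + ρ • (ω : EuclideanSpace ℝ (Fin n)))
                  - v (y - ρ • (ω : EuclideanSpace ℝ (Fin n))))|
                ≤ 2 * (M * ρ ^ (t-2)) * ρ * r := by
              intro ω
              have b := case2_large v (fderiv ℝ v) (fderiv ℝ (fderiv ℝ v)) M (t-2)
                hd1 hd2 hH2 hM hγ0 x y (ρ • (ω : EuclideanSpace ℝ (Fin n)))
              rw [hω ρ hρ ω, norm_sub_rev, ← hrdef] at b
              linarith [b]
            have hKnn : (0:ℝ) ≤ 2 * (M * ρ ^ (t-2)) * ρ * r := by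
              have h1 : (0:ℝ) ≤ M * ρ ^ (t-2) :=
                mul_nonneg hM (Real.rpow_nonneg hρ.le _)
              exact mul_nonneg (mul_nonneg (by linarith) hρ.le) hr.le
            have hPd := hPdiff ρ _ hKnn hb
            calc |P x ρ - P y ρ| / ρ ^ (1+2*s)
                ≤ (Λ * (2 * (M * ρ ^ (t-2)) * ρ * r)) / ρ ^ (1+2*s) :=
                  (div_le_div_iff_of_pos_right (Real.rpow_pos_of_pos hρ _)).mpr hPd
              _ = Λ*(2*M*r) * ρ ^ ((t-1)-(1+2*s)) := by
                  rw [div_eq_iff (Real.rpow_pos_of_pos hρ (1+2*s)).ne']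
                  have eD : ρ ^ ((t-1)-(1+2*s)) * ρ^(1+2*s) = ρ^(t-2) * ρ := by
                    rw [← Real.rpow_add hρ, ← Real.rpow_add_one hρ.ne' (t-2)]
                    congr 1; ring
                  linear_combination (-(2*Λ*M*r))*eD
        · rw [hval]
          have e₁ : t - (1+2*s) + 1 = β := by rw [ht]; ring
          have e₂v : 2 - (1+2*s) + 1 = 2 - 2*s := by ring
          have e₃v : (t-1) - (1+2*s) + 1 = β - 1 := by rw [ht]; ring
          rw [e₁, e₂v, e₃v]
          have eF : r^(t-2) * r^(2-2*s) = r^β := by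
            rw [← Real.rpow_add hr]; congr 1; rw [ht]; ring
          have eG : r * r^(β-1) = r^β := by
            calc r * r^(β-1) = r^(1:ℝ) * r^(β-1) := by rw [Real.rpow_one]
              _ = r^β := by rw [← Real.rpow_add hr]; congr 1; ring
          have key : Λ*(4*M) * (r^β/β) + Λ*(2*M*r^(t-2)) * (r^(2-2*s)/(2-2*s))
              + Λ*(2*M*r) * (r^(β-1)/(-(β-1)))
              = Λ * (4/β + 2/(2-2*s) + 2/(1-β)) * M * r^β := by
            linear_combination (Λ*(2*M)/(2-2*s))*eF + (Λ*(2*M)/(-(β-1)))*eG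
          rw [key]
          have expand : Λ * (4/β + 2/s + 2/(1-β) + 2/(2-2*s)) * M * r^β
              = Λ*(4/β + 2/(2-2*s) + 2/(1-β))*M*r^β + Λ*(2/s)*M*r^β := by ring
          rw [expand]
          linarith
  obtain ⟨K, hKb, hKint, hKval⟩ := main
  have hrpow : ∀ ρ : ℝ, ρ ∈ Ioi (0:ℝ) → (0:ℝ) < ρ ^ (1 + 2*s) :=
    fun ρ hρ => Real.rpow_pos_of_pos hρ _
  have hdm : AEStronglyMeasurable (fun ρ => (P x ρ - P y ρ) / ρ ^ (1 + 2*s))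
      (volume.restrict (Ioi 0)) :=
    (((hPm x).sub (hPm y)).div ((Real.continuous_rpow_const (by linarith : (0:ℝ) ≤ 1 + 2*s)).measurable)).aestronglyMeasurable
  have hdbound : ∀ᵐ ρ ∂(volume.restrict (Ioi (0:ℝ))),
      ‖(P x ρ - P y ρ) / ρ ^ (1 + 2*s)‖ ≤ K ρ := by
    refine (ae_restrict_iff' measurableSet_Ioi).mpr (ae_of_all _ (fun ρ hρ => ?_))
    rw [Real.norm_eq_abs, abs_div, abs_of_pos (hrpow ρ hρ)]
    exact hKb ρ hρ
  have hdint : IntegrableOn (fun ρ => (P x ρ - P y ρ) / ρ ^ (1 + 2*s)) (Ioi 0) :=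
    hKint.mono' hdm hdbound
  have hfg : (fun ρ : ℝ => P y ρ / ρ ^ (1 + 2*s))
      = fun ρ => P x ρ / ρ ^ (1 + 2*s) - (P x ρ - P y ρ) / ρ ^ (1 + 2*s) := by
    funext ρ
    rw [div_sub_div_same]
    ring_nf
  by_cases hFi : Integrable (fun ρ => P x ρ / ρ ^ (1 + 2*s)) (volume.restrict (Ioi 0))
  · have hGi : Integrable (fun ρ => P y ρ / ρ ^ (1 + 2*s)) (volume.restrict (Ioi 0)) := by
      rw [hfg]; exact hFi.sub hdint
    rw [hOp x, hOp y, ← integral_sub hFi hGi]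
    have e : (fun ρ : ℝ => P x ρ / ρ ^ (1 + 2*s) - P y ρ / ρ ^ (1 + 2*s))
        = fun ρ : ℝ => (P x ρ - P y ρ) / ρ ^ (1 + 2*s) := by
      funext ρ; rw [div_sub_div_same]
    rw [e, ← Real.norm_eq_abs]
    exact (norm_integral_le_of_norm_le hKint hdbound).trans hKval
  · have hGi : ¬ Integrable (fun ρ => P y ρ / ρ ^ (1 + 2*s)) (volume.restrict (Ioi 0)) := by
      intro hGi
      apply hFi
      have e : (fun ρ : ℝ => P y ρ / ρ ^ (1 + 2*s) + (P x ρ - P y ρ) / ρ ^ (1 + 2*s))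
          = fun ρ : ℝ => P x ρ / ρ ^ (1 + 2*s) := by
        funext ρ; rw [← add_div]; ring_nf
      rw [← e]
      exact hGi.add hdint
    rw [hOp x, hOp y, integral_undef hFi, integral_undef hGi]
    have : (0:ℝ) ≤ Λ * (4/β + 2/s + 2/(1-β) + 2/(2-2*s)) * M * r ^ β :=
      mul_nonneg (mul_nonneg hC0.le hM) (Real.rpow_nonneg hr.le β)
    simpa using this

end
end

section
/- Let v ∈ C^{γ}(ℝⁿ) with γ ∈ (2,3), and w_{ρ,ω}(x) = 2v(x) − v(x+ρω) − v(x−ρω). Then |w_{ρ,ω}(x) − w_{ρ,ω}(y)| ≤ C [v]_{C^γ(ℝⁿ)} min{ρ² |x−y|^{γ−2}, ρ^{γ−1} |x−y|}. -/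
open Metric Set

section Helpers

variable {E F : Type*} [NormedAddCommGroup E] [NormedSpace ℝ E]
  [NormedAddCommGroup F] [NormedSpace ℝ F]

lemma sde_aux_line (f : E → F) (hf : Differentiable ℝ f) (z d : E) (s : ℝ) :
    HasDerivAt (fun t : ℝ => f (z + t • d)) (fderiv ℝ f (z + s • d) d) s := by
  have h1 : HasDerivAt (fun t : ℝ => z + t • d) d s := by
    simpa using ((hasDerivAt_id s).smul_const d).const_add z
  simpa [Function.comp_def] using (hf (z + s • d)).hasFDerivAt.comp_hasDerivAt s h1

lemma sde_aux_line2 (v : E → ℝ) (hv : ContDiff ℝ 2 v) (z d u : E) (s : ℝ) :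
    HasDerivAt (fun t : ℝ => fderiv ℝ v (z + t • d) u)
      (fderiv ℝ (fderiv ℝ v) (z + s • d) d u) s := by
  have hd2 : Differentiable ℝ (fderiv ℝ v) :=
    (hv.fderiv_right (m := 1) (by norm_num)).differentiable one_ne_zero
  have h := sde_aux_line (fderiv ℝ v) hd2 z d s
  simpa using h.clm_apply (hasDerivAt_const s u)

lemma sde_holder_apply (v : E → ℝ) (M γ : ℝ)
    (hM : ∀ x y : E, ‖iteratedFDeriv ℝ 2 v x - iteratedFDeriv ℝ 2 v y‖
      ≤ M * ‖x - y‖ ^ (γ - 2)) (a b p q : E) :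
    |fderiv ℝ (fderiv ℝ v) a p q - fderiv ℝ (fderiv ℝ v) b p q|
      ≤ M * ‖a - b‖ ^ (γ - 2) * (‖p‖ * ‖q‖) := by
  have h1 : fderiv ℝ (fderiv ℝ v) a p q - fderiv ℝ (fderiv ℝ v) b p q
      = (iteratedFDeriv ℝ 2 v a - iteratedFDeriv ℝ 2 v b) ![p, q] := by
    simp [iteratedFDeriv_two_apply]
  rw [h1, ← Real.norm_eq_abs]
  calc ‖(iteratedFDeriv ℝ 2 v a - iteratedFDeriv ℝ 2 v b) ![p, q]‖
      ≤ ‖iteratedFDeriv ℝ 2 v a - iteratedFDeriv ℝ 2 v b‖ * (‖p‖ * ‖q‖) := by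
        have := (iteratedFDeriv ℝ 2 v a - iteratedFDeriv ℝ 2 v b).le_opNorm ![p, q]
        simpa [Fin.prod_univ_two, mul_assoc] using this
    _ ≤ M * ‖a - b‖ ^ (γ - 2) * (‖p‖ * ‖q‖) :=
        mul_le_mul_of_nonneg_right (hM a b) (by positivity)

/-- Bound (a): `|w(x) - w(y)| ≤ M ‖x-y‖^{γ-2} ρ²`. -/
lemma sde_boundA (v : E → ℝ) (M γ : ℝ) (hv : ContDiff ℝ 2 v)
    (hM : ∀ x y : E, ‖iteratedFDeriv ℝ 2 v x - iteratedFDeriv ℝ 2 v y‖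
      ≤ M * ‖x - y‖ ^ (γ - 2))
    (ω : E) (hω : ‖ω‖ = 1) (ρ : ℝ) (hρ : 0 ≤ ρ) (x y : E) :
    |(2 * v x - v (x + ρ • ω) - v (x - ρ • ω)) -
        (2 * v y - v (y + ρ • ω) - v (y - ρ • ω))|
      ≤ M * ‖x - y‖ ^ (γ - 2) * ρ ^ 2 := by
  have hd1 : Differentiable ℝ v := hv.differentiable two_ne_zero
  set K := M * ‖x - y‖ ^ (γ - 2) with hK
  -- the function along ρ
  set f : ℝ → ℝ := fun r =>
    (2 * v x - v (x + r • ω) - v (x + r • (-ω))) -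
      (2 * v y - v (y + r • ω) - v (y + r • (-ω))) with hf
  set f' : ℝ → ℝ := fun r =>
    -(fderiv ℝ v (x + r • ω) ω) - fderiv ℝ v (x + r • (-ω)) (-ω)
      + fderiv ℝ v (y + r • ω) ω + fderiv ℝ v (y + r • (-ω)) (-ω) with hf'def
  have hf' : ∀ r : ℝ, HasDerivAt f (f' r) r := by
    intro r
    have h1 := sde_aux_line v hd1 x ω r
    have h2 := sde_aux_line v hd1 x (-ω) r
    have h3 := sde_aux_line v hd1 y ω r
    have h4 := sde_aux_line v hd1 y (-ω) r
    have h := (((hasDerivAt_const r (2 * v x)).sub h1).sub h2).sub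
      (((hasDerivAt_const r (2 * v y)).sub h3).sub h4)
    refine h.congr_deriv ?_
    simp [hf'def]; ring
  -- intermediate function H
  set H : ℝ → ℝ := fun s => fderiv ℝ v (x + s • ω) ω - fderiv ℝ v (y + s • ω) ω with hH
  have hH' : ∀ s : ℝ, HasDerivAt H
      (fderiv ℝ (fderiv ℝ v) (x + s • ω) ω ω - fderiv ℝ (fderiv ℝ v) (y + s • ω) ω ω) s :=
    fun s => (sde_aux_line2 v hv x ω ω s).sub (sde_aux_line2 v hv y ω ω s)
  have hHbound : ∀ s : ℝ, ‖fderiv ℝ (fderiv ℝ v) (x + s • ω) ω ω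
      - fderiv ℝ (fderiv ℝ v) (y + s • ω) ω ω‖ ≤ K := by
    intro s
    have h := sde_holder_apply v M γ hM (x + s • ω) (y + s • ω) ω ω
    simpa [hω, hK, add_sub_add_right_eq_sub] using h
  -- bound on f'
  have hbound : ∀ r ∈ Ico (0 : ℝ) ρ, ‖f' r‖ ≤ K * (2 * r) := by
    intro r hr
    have hrr : r ∈ Icc (-r) r := ⟨by linarith [hr.1], le_rfl⟩
    have hseg := norm_image_sub_le_of_norm_deriv_le_segment'
      (f := H) (a := -r) (b := r)
      (fun s _ => (hH' s).hasDerivWithinAt) (fun s _ => hHbound s) r hrr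
    have heq : f' r = H (-r) - H r := by
      simp only [hf'def, hH]
      have e1 : x + r • (-ω) = x + (-r) • ω := by
        rw [smul_neg, neg_smul]
      have e2 : y + r • (-ω) = y + (-r) • ω := by
        rw [smul_neg, neg_smul]
      rw [e1, e2, map_neg, map_neg]
      ring
    rw [heq, Real.norm_eq_abs, abs_sub_comm, ← Real.norm_eq_abs]
    calc ‖H r - H (-r)‖ ≤ K * (r - -r) := hseg
      _ = K * (2 * r) := by ring
  -- apply the boundary lemma
  have key : ∀ r ∈ Icc (0 : ℝ) ρ, ‖f r‖ ≤ K * r ^ 2 := by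
    refine image_norm_le_of_norm_deriv_right_le_deriv_boundary
      (fun r _ => (hf' r).continuousAt.continuousWithinAt)
      (fun r _ => (hf' r).hasDerivWithinAt) ?_ (B' := fun r => K * (2 * r)) ?_ hbound
    · simp [hf]; ring
    · intro r
      have := (hasDerivAt_pow 2 r).const_mul K
      simpa [pow_one, mul_assoc] using this
  have hfin := key ρ ⟨hρ, le_rfl⟩
  have hrw : f ρ = (2 * v x - v (x + ρ • ω) - v (x - ρ • ω)) -
      (2 * v y - v (y + ρ • ω) - v (y - ρ • ω)) := by
    simp only [hf, smul_neg, ← sub_eq_add_neg]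
  rw [hrw] at hfin
  simpa [Real.norm_eq_abs] using hfin

end Helpers
section HelpersB

variable {E : Type*} [NormedAddCommGroup E] [NormedSpace ℝ E]

/-- Second difference of the gradient: `|2 Dv(z)u - Dv(z+ρω)u - Dv(z-ρω)u| ≤ M 2^{γ-2}/(γ-1) ρ^{γ-1} ‖u‖`. -/
lemma sde_gradB (v : E → ℝ) (M γ : ℝ) (hγ : γ ∈ Set.Ioo (2 : ℝ) 3) (hv : ContDiff ℝ 2 v)
    (hM : ∀ x y : E, ‖iteratedFDeriv ℝ 2 v x - iteratedFDeriv ℝ 2 v y‖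
      ≤ M * ‖x - y‖ ^ (γ - 2))
    (ω : E) (hω : ‖ω‖ = 1) (ρ : ℝ) (hρ : 0 ≤ ρ) (z u : E) :
    |2 * fderiv ℝ v z u - fderiv ℝ v (z + ρ • ω) u - fderiv ℝ v (z - ρ • ω) u|
      ≤ M * (2 ^ (γ - 2) / (γ - 1)) * ρ ^ (γ - 1) * ‖u‖ := by
  have hγ1 : (1 : ℝ) < γ - 1 := by have := hγ.1; linarith
  have hγ1' : γ - 1 ≠ 0 := by linarith
  set f : ℝ → ℝ := fun s =>
    (fderiv ℝ v (z + s • ω) u + fderiv ℝ v (z + s • (-ω)) u) - 2 * fderiv ℝ v z u with hf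
  set f' : ℝ → ℝ := fun s =>
    fderiv ℝ (fderiv ℝ v) (z + s • ω) ω u + fderiv ℝ (fderiv ℝ v) (z + s • (-ω)) (-ω) u
    with hf'def
  have hf' : ∀ s : ℝ, HasDerivAt f (f' s) s := by
    intro s
    have h := ((sde_aux_line2 v hv z ω u s).add (sde_aux_line2 v hv z (-ω) u s)).sub
      (hasDerivAt_const s (2 * fderiv ℝ v z u))
    simpa [hf, hf'def, Pi.add_def, Pi.sub_def] using h
  set c : ℝ := M * ‖u‖ * 2 ^ (γ - 2) / (γ - 1) with hc
  have hB : ∀ s : ℝ, HasDerivAt (fun s : ℝ => c * s ^ (γ - 1))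
      (M * ‖u‖ * 2 ^ (γ - 2) * s ^ (γ - 2)) s := by
    intro s
    have h := (Real.hasDerivAt_rpow_const (x := s) (p := γ - 1) (Or.inr hγ1.le)).const_mul c
    have e : γ - 1 - 1 = γ - 2 := by ring
    rw [e] at h
    refine h.congr_deriv ?_
    rw [hc]
    field_simp
  have hbound : ∀ s ∈ Ico (0 : ℝ) ρ, ‖f' s‖ ≤ M * ‖u‖ * 2 ^ (γ - 2) * s ^ (γ - 2) := by
    intro s hs
    have heq : f' s = fderiv ℝ (fderiv ℝ v) (z + s • ω) ω u
        - fderiv ℝ (fderiv ℝ v) (z + (-s) • ω) ω u := by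
      simp only [hf'def]
      have e1 : z + s • (-ω) = z + (-s) • ω := by rw [smul_neg, neg_smul]
      rw [e1, map_neg]
      simp [sub_eq_add_neg]
    have h := sde_holder_apply v M γ hM (z + s • ω) (z + (-s) • ω) ω u
    have e2 : (z + s • ω) - (z + (-s) • ω) = (2 * s) • ω := by
      rw [add_sub_add_left_eq_sub, ← sub_smul]
      norm_num
      ring_nf
    have e3 : ‖(z + s • ω) - (z + (-s) • ω)‖ = 2 * s := by
      rw [e2, norm_smul, hω, mul_one, Real.norm_eq_abs, abs_of_nonneg (by linarith [hs.1])]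
    rw [e3, hω] at h
    have e4 : (2 * s) ^ (γ - 2) = 2 ^ (γ - 2) * s ^ (γ - 2) :=
      Real.mul_rpow (by norm_num) hs.1
    rw [heq, Real.norm_eq_abs]
    calc |fderiv ℝ (fderiv ℝ v) (z + s • ω) ω u - fderiv ℝ (fderiv ℝ v) (z + (-s) • ω) ω u|
        ≤ M * (2 * s) ^ (γ - 2) * (1 * ‖u‖) := h
      _ = M * ‖u‖ * 2 ^ (γ - 2) * s ^ (γ - 2) := by rw [e4]; ring
  have key : ∀ s ∈ Icc (0 : ℝ) ρ, ‖f s‖ ≤ c * s ^ (γ - 1) := by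
    refine image_norm_le_of_norm_deriv_right_le_deriv_boundary
      (fun s _ => (hf' s).continuousAt.continuousWithinAt)
      (fun s _ => (hf' s).hasDerivWithinAt) ?_ hB hbound
    · simp [hf, Real.zero_rpow hγ1']
      ring
  have hfin := key ρ ⟨hρ, le_rfl⟩
  have hrw : f ρ = (fderiv ℝ v (z + ρ • ω) u + fderiv ℝ v (z - ρ • ω) u)
      - 2 * fderiv ℝ v z u := by
    simp only [hf, smul_neg, ← sub_eq_add_neg]
  rw [hrw, Real.norm_eq_abs, abs_sub_comm] at hfin
  calc |2 * fderiv ℝ v z u - fderiv ℝ v (z + ρ • ω) u - fderiv ℝ v (z - ρ • ω) u|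
      = |2 * fderiv ℝ v z u - (fderiv ℝ v (z + ρ • ω) u + fderiv ℝ v (z - ρ • ω) u)| := by
        ring_nf
    _ ≤ c * ρ ^ (γ - 1) := hfin
    _ = M * (2 ^ (γ - 2) / (γ - 1)) * ρ ^ (γ - 1) * ‖u‖ := by
        rw [hc]; ring

/-- Bound (b): `|w(x) - w(y)| ≤ M 2^{γ-2}/(γ-1) ρ^{γ-1} ‖x-y‖`. -/
lemma sde_boundB (v : E → ℝ) (M γ : ℝ) (hγ : γ ∈ Set.Ioo (2 : ℝ) 3) (hv : ContDiff ℝ 2 v)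
    (hM : ∀ x y : E, ‖iteratedFDeriv ℝ 2 v x - iteratedFDeriv ℝ 2 v y‖
      ≤ M * ‖x - y‖ ^ (γ - 2))
    (ω : E) (hω : ‖ω‖ = 1) (ρ : ℝ) (hρ : 0 ≤ ρ) (x y : E) :
    |(2 * v x - v (x + ρ • ω) - v (x - ρ • ω)) -
        (2 * v y - v (y + ρ • ω) - v (y - ρ • ω))|
      ≤ M * (2 ^ (γ - 2) / (γ - 1)) * ρ ^ (γ - 1) * ‖x - y‖ := by
  have hd1 : Differentiable ℝ v := hv.differentiable two_ne_zero
  set u : E := x - y with hu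
  set φ : ℝ → ℝ := fun t =>
    2 * v (y + t • u) - v ((y + ρ • ω) + t • u) - v ((y - ρ • ω) + t • u) with hφ
  set φ' : ℝ → ℝ := fun t =>
    2 * fderiv ℝ v (y + t • u) u - fderiv ℝ v ((y + ρ • ω) + t • u) u
      - fderiv ℝ v ((y - ρ • ω) + t • u) u with hφ'def
  have hφ' : ∀ t : ℝ, HasDerivAt φ (φ' t) t := by
    intro t
    exact (((sde_aux_line v hd1 y u t).const_mul 2).sub
      (sde_aux_line v hd1 (y + ρ • ω) u t)).sub (sde_aux_line v hd1 (y - ρ • ω) u t)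
  have hbound : ∀ t ∈ Ico (0 : ℝ) 1, ‖φ' t‖
      ≤ M * (2 ^ (γ - 2) / (γ - 1)) * ρ ^ (γ - 1) * ‖u‖ := by
    intro t _
    have e1 : (y + ρ • ω) + t • u = (y + t • u) + ρ • ω := by abel
    have e2 : (y - ρ • ω) + t • u = (y + t • u) - ρ • ω := by abel
    have h := sde_gradB v M γ hγ hv hM ω hω ρ hρ (y + t • u) u
    rw [Real.norm_eq_abs, hφ'def]
    simpa [e1, e2] using h
  have key := norm_image_sub_le_of_norm_deriv_le_segment_01'
    (fun t _ => (hφ' t).hasDerivWithinAt) hbound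
  have e0 : y + (1 : ℝ) • u = x := by rw [one_smul, hu]; abel
  have ea : (y + ρ • ω) + (1 : ℝ) • u = x + ρ • ω := by
    rw [add_right_comm, e0]
  have eb : (y - ρ • ω) + (1 : ℝ) • u = x - ρ • ω := by
    rw [sub_add_eq_add_sub, e0]
  have h1 : φ 1 = 2 * v x - v (x + ρ • ω) - v (x - ρ • ω) := by
    simp only [hφ]
    rw [e0, ea, eb]
  have h0 : φ 0 = 2 * v y - v (y + ρ • ω) - v (y - ρ • ω) := by
    simp [hφ]
  rw [h1, h0, Real.norm_eq_abs] at key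
  exact key

end HelpersB

/-- Second-difference estimates for `v ∈ C^γ(ℝⁿ)`, `γ ∈ (2,3)`: with
`w_{ρ,ω}(x) = 2v(x) - v(x+ρω) - v(x-ρω)`,
`|w_{ρ,ω}(x) - w_{ρ,ω}(y)| ≤ C [v]_{C^γ} min{ρ² |x-y|^{γ-2}, ρ^{γ-1} |x-y|}`. -/
theorem second_difference_estimates_C2gamma
    (n : ℕ) (γ : ℝ) (hγ : γ ∈ Set.Ioo (2 : ℝ) 3) :
    ∃ C > 0, ∀ (v : EuclideanSpace ℝ (Fin n) → ℝ) (M : ℝ)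
      (ω : EuclideanSpace ℝ (Fin n)) (ρ : ℝ),
      ContDiff ℝ 2 v → ‖ω‖ = 1 → 0 ≤ ρ →
      (∀ x y : EuclideanSpace ℝ (Fin n),
        ‖iteratedFDeriv ℝ 2 v x - iteratedFDeriv ℝ 2 v y‖
          ≤ M * ‖x - y‖ ^ (γ - 2)) →
      ∀ x y : EuclideanSpace ℝ (Fin n),
        |(2 * v x - v (x + ρ • ω) - v (x - ρ • ω)) -
            (2 * v y - v (y + ρ • ω) - v (y - ρ • ω))|
          ≤ C * M * min (ρ ^ 2 * ‖x - y‖ ^ (γ - 2)) (ρ ^ (γ - 1) * ‖x - y‖) := by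
  refine ⟨2, by norm_num, ?_⟩
  intro v M ω ρ hv hω hρ hM x y
  have hne : γ - 2 ≠ 0 := by have := hγ.1; linarith
  rcases eq_or_ne x y with rfl | hxy
  · simp only [sub_self, abs_zero, norm_zero]
    rw [Real.zero_rpow hne, mul_zero, mul_zero, min_self, mul_zero]
  · have hpos : 0 < ‖x - y‖ := by
      rw [norm_pos_iff]; exact sub_ne_zero.mpr hxy
    have hM0 : 0 ≤ M := by
      have h := (norm_nonneg (iteratedFDeriv ℝ 2 v x - iteratedFDeriv ℝ 2 v y)).trans (hM x y)
      have hp := Real.rpow_pos_of_pos hpos (γ - 2)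
      nlinarith
    have hA := sde_boundA v M γ hv hM ω hω ρ hρ x y
    have hB := sde_boundB v M γ hγ hv hM ω hω ρ hρ x y
    have hrp : (0:ℝ) ≤ ‖x - y‖ ^ (γ - 2) := Real.rpow_nonneg (norm_nonneg _) _
    have hrr : (0:ℝ) ≤ ρ ^ (γ - 1) := Real.rpow_nonneg hρ _
    have hc : (2:ℝ) ^ (γ - 2) / (γ - 1) ≤ 2 := by
      have h1 : (2:ℝ) ^ (γ - 2) ≤ 2 ^ (1:ℝ) :=
        Real.rpow_le_rpow_of_exponent_le one_le_two (by linarith [hγ.2])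
      rw [Real.rpow_one] at h1
      rw [div_le_iff₀ (by linarith [hγ.1] : (0:ℝ) < γ - 1)]
      nlinarith [hγ.1]
    rw [mul_assoc, mul_min_of_nonneg _ _ hM0,
      mul_min_of_nonneg _ _ (by norm_num : (0:ℝ) ≤ 2)]
    refine le_min (hA.trans ?_) (hB.trans ?_)
    · nlinarith [mul_nonneg (mul_nonneg hM0 hrp) (sq_nonneg ρ)]
    · calc M * (2 ^ (γ - 2) / (γ - 1)) * ρ ^ (γ - 1) * ‖x - y‖
          = (M * (2 ^ (γ - 2) / (γ - 1))) * (ρ ^ (γ - 1) * ‖x - y‖) := by ring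
        _ ≤ (M * 2) * (ρ ^ (γ - 1) * ‖x - y‖) :=
            mul_le_mul_of_nonneg_right (mul_le_mul_of_nonneg_left hc hM0)
              (mul_nonneg hrr hpos.le)
        _ = 2 * (M * (ρ ^ (γ - 1) * ‖x - y‖)) := by ring
end
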